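/- arXiv:1203.4175 — 5 statements merged into one kernel-verified Lean document; each statement's English description precedes it below -/
import Mathlib

section
/- Let K ⊆ ℝ^n be a closed convex set with Lebesgue measure vol(K) < 1/n!. Then the convex hull of the integer points of K has affine dimension at most n−1. -/
open MeasureTheory ENNReal Pointwise

noncomputable section

/-- The simplex `{x | 0 ≤ x, ∑ x ≤ r}`. -/
def simT (n : ℕ) (r : ℝ) : Set (Fin n → ℝ) := {x | (∀ i, 0 ≤ x i) ∧ ∑ i, x i ≤ r}

lemma simT_measurable (n : ℕ) (r : ℝ) : MeasurableSet (simT n r) := by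
  have h : simT n r = (⋂ i, {x : Fin n → ℝ | 0 ≤ x i}) ∩ {x | ∑ i, x i ≤ r} := by
    ext x; simp [simT, Set.mem_iInter]
  rw [h]
  exact (MeasurableSet.iInter fun i =>
      measurableSet_le measurable_const (measurable_pi_apply i)).inter
    (measurableSet_le (Finset.measurable_sum _ fun i _ => measurable_pi_apply i) measurable_const)

lemma simT_empty {n : ℕ} {r : ℝ} (hr : r < 0) : simT n r = ∅ := by
  ext x
  simp only [simT, Set.mem_setOf_eq, Set.mem_empty_iff_false, iff_false, not_and]
  intro hx hs
  have : (0:ℝ) ≤ ∑ i, x i := Finset.sum_nonneg fun i _ => hx i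
  linarith

lemma simT_volume : ∀ (n : ℕ) (r : ℝ),
    volume (simT n r) = if 0 ≤ r then ENNReal.ofReal (r ^ n / n.factorial) else 0 := by
  intro n
  induction n with
  | zero =>
    intro r
    split_ifs with h
    · have hu : simT 0 r = Set.univ := by
        ext x; simp [simT, h]
      rw [hu, volume_pi, Measure.pi_univ]
      simp
    · rw [simT_empty (lt_of_not_ge h)]; simp
  | succ n ih =>
    intro r
    by_cases hr : 0 ≤ r
    swap
    · rw [simT_empty (lt_of_not_ge hr)]; simp [hr]
    rw [if_pos hr]
    have hmp := (measurePreserving_piFinSuccAbove (fun _ : Fin (n+1) => (volume : Measure ℝ)) 0).symm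
    have key : volume (simT (n+1) r)
        = (((volume : Measure ℝ)).prod (Measure.pi fun _ : Fin n => (volume : Measure ℝ)))
          ((MeasurableEquiv.piFinSuccAbove (fun _ : Fin (n+1) => ℝ) 0).symm ⁻¹' simT (n+1) r) := by
      rw [hmp.measure_preimage (simT_measurable _ _).nullMeasurableSet, volume_pi]
    have himg : (MeasurableEquiv.piFinSuccAbove (fun _ : Fin (n+1) => ℝ) 0).symm ⁻¹' simT (n+1) r
        = {p : ℝ × (Fin n → ℝ) | 0 ≤ p.1 ∧ p.2 ∈ simT n (r - p.1)} := by
      ext ⟨t, y⟩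
      simp only [Set.mem_preimage, MeasurableEquiv.piFinSuccAbove_symm_apply, simT,
        Set.mem_setOf_eq, Fin.insertNthEquiv_apply, Fin.insertNth_zero']
      constructor
      · rintro ⟨h1, h2⟩
        rw [Fin.forall_fin_succ] at h1
        rw [Fin.sum_univ_succ] at h2
        simp only [Fin.cons_zero, Fin.cons_succ] at h1 h2 ⊢
        exact ⟨h1.1, h1.2, by linarith⟩
      · rintro ⟨h0, h1, h2⟩
        refine ⟨?_, ?_⟩
        · rw [Fin.forall_fin_succ]
          simp only [Fin.cons_zero, Fin.cons_succ]
          exact ⟨h0, h1⟩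
        · rw [Fin.sum_univ_succ]
          simp only [Fin.cons_zero, Fin.cons_succ]
          linarith
    have hmeas : MeasurableSet {p : ℝ × (Fin n → ℝ) | 0 ≤ p.1 ∧ p.2 ∈ simT n (r - p.1)} := by
      rw [← himg]
      exact (MeasurableEquiv.piFinSuccAbove _ 0).symm.measurable (simT_measurable _ _)
    rw [key, himg, Measure.prod_apply hmeas]
    have hslice : ∀ t : ℝ,
        (Measure.pi fun _ : Fin n => (volume : Measure ℝ))
          (Prod.mk t ⁻¹' {p : ℝ × (Fin n → ℝ) | 0 ≤ p.1 ∧ p.2 ∈ simT n (r - p.1)})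
        = Set.indicator (Set.Icc 0 r)
            (fun t => ENNReal.ofReal ((r - t) ^ n / n.factorial)) t := by
      intro t
      have hpre : Prod.mk t ⁻¹' {p : ℝ × (Fin n → ℝ) | 0 ≤ p.1 ∧ p.2 ∈ simT n (r - p.1)}
          = {y : Fin n → ℝ | 0 ≤ t ∧ y ∈ simT n (r - t)} := rfl
      rw [hpre]
      by_cases ht : 0 ≤ t
      · by_cases htr : t ≤ r
        · have h1 : {y : Fin n → ℝ | 0 ≤ t ∧ y ∈ simT n (r - t)} = simT n (r - t) := by
            ext y; simp [ht]
          rw [h1, ← volume_pi, ih, if_pos (by linarith), Set.indicator_of_mem (Set.mem_Icc.mpr ⟨ht, htr⟩)]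
        · have h1 : {y : Fin n → ℝ | 0 ≤ t ∧ y ∈ simT n (r - t)} = (∅ : Set (Fin n → ℝ)) := by
            rw [simT_empty (by linarith)]; simp
          rw [h1, measure_empty, Set.indicator_of_notMem]
          simp only [Set.mem_Icc, not_and]
          intro _; linarith
      · have h1 : {y : Fin n → ℝ | 0 ≤ t ∧ y ∈ simT n (r - t)} = (∅ : Set (Fin n → ℝ)) := by
          ext y; simp [ht]
        rw [h1, measure_empty, Set.indicator_of_notMem]
        simp only [Set.mem_Icc, not_and]
        intro h; exact absurd h ht
    simp_rw [hslice]
    rw [lintegral_indicator measurableSet_Icc]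
    have hcont : Continuous fun t : ℝ => (r - t) ^ n / (n.factorial : ℝ) :=
      ((continuous_const.sub continuous_id).pow n).div_const _
    have hint : IntegrableOn (fun t : ℝ => (r - t) ^ n / (n.factorial : ℝ)) (Set.Icc 0 r) :=
      hcont.integrableOn_Icc
    have hnn : 0 ≤ᵐ[volume.restrict (Set.Icc (0:ℝ) r)]
        fun t : ℝ => (r - t) ^ n / (n.factorial : ℝ) := by
      refine ae_restrict_of_forall_mem measurableSet_Icc fun t ht => ?_
      exact div_nonneg (pow_nonneg (by linarith [ht.2]) n) (Nat.cast_nonneg _)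
    rw [← ofReal_integral_eq_lintegral_ofReal hint hnn]
    congr 1
    rw [MeasureTheory.integral_Icc_eq_integral_Ioc, ← intervalIntegral.integral_of_le hr]
    have hcs := intervalIntegral.integral_comp_sub_left
      (a := (0:ℝ)) (b := r) (fun x : ℝ => x ^ n / (n.factorial : ℝ)) r
    rw [hcs, sub_self, sub_zero, intervalIntegral.integral_div, integral_pow]
    have hfac : ((n+1).factorial : ℝ) = (n+1) * (n.factorial : ℝ) := by
      rw [Nat.factorial_succ]; push_cast; ring
    have h1 : ((n:ℝ) + 1) ≠ 0 := by positivity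
    have h2 : (n.factorial : ℝ) ≠ 0 := Nat.cast_ne_zero.mpr n.factorial_ne_zero
    rw [hfac]
    rw [zero_pow (Nat.succ_ne_zero n), sub_zero]
    field_simp

theorem stmt0 {n : ℕ} (hn : 1 ≤ n) (K : Set (Fin n → ℝ))
    (hKclosed : IsClosed K) (hKconv : Convex ℝ K)
    (hvol : volume K < ((n.factorial : ℝ≥0∞))⁻¹) :
    Module.finrank ℝ
      (affineSpan ℝ (convexHull ℝ {x ∈ K | ∀ i, ∃ z : ℤ, x i = (z : ℝ)})).direction
      ≤ n - 1 := by
  by_contra hcon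
  push_neg at hcon
  set S := {x ∈ K | ∀ i, ∃ z : ℤ, x i = (z : ℝ)} with hSdef
  haveI : Nonempty (Fin n) := ⟨⟨0, hn⟩⟩
  have hamb : Module.finrank ℝ (Fin n → ℝ) = n := by
    simp [Module.finrank_pi]
  have hdirle : Module.finrank ℝ (affineSpan ℝ (convexHull ℝ S)).direction ≤ n := by
    calc Module.finrank ℝ (affineSpan ℝ (convexHull ℝ S)).direction
        ≤ Module.finrank ℝ (Fin n → ℝ) := Submodule.finrank_le _
      _ = n := hamb
  have hd : Module.finrank ℝ (affineSpan ℝ (convexHull ℝ S)).direction = n := by omega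
  have htop : vectorSpan ℝ S = ⊤ := by
    have hdir : (affineSpan ℝ (convexHull ℝ S)).direction = vectorSpan ℝ S := by
      rw [affineSpan_convexHull, direction_affineSpan]
    rw [← hdir]
    exact Submodule.eq_top_of_finrank_eq (by rw [hd, hamb])
  obtain ⟨p₀, hp₀⟩ : S.Nonempty := by
    rcases S.eq_empty_or_nonempty with h | h
    · rw [h, vectorSpan_empty] at htop
      exact absurd htop bot_ne_top
    · exact h
  obtain ⟨b, hbsub, hbspan, hbli⟩ := exists_linearIndependent ℝ ((· -ᵥ p₀) '' S)
  rw [← vectorSpan_eq_span_vsub_set_right ℝ hp₀, htop] at hbspan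
  have hbfin : b.Finite := hbli.setFinite
  haveI := hbfin.fintype
  let B : Module.Basis b ℝ (Fin n → ℝ) := Module.Basis.mk hbli (by rw [Subtype.range_coe, hbspan])
  have hcard : Fintype.card b = n := by
    have h := Module.finrank_eq_card_basis B
    rw [hamb] at h
    omega
  let e : b ≃ Fin n := Fintype.equivFinOfCardEq hcard
  let v : Fin n → (Fin n → ℝ) := fun i => ((e.symm i : b) : Fin n → ℝ)
  have hvli : LinearIndependent ℝ v := hbli.comp e.symm e.symm.injective
  have hvS : ∀ i, ∃ x ∈ S, v i = x - p₀ := by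
    intro i
    obtain ⟨x, hx, hxe⟩ := hbsub (e.symm i).2
    exact ⟨x, hx, hxe.symm⟩
  choose x hxS hxv using hvS
  let A : Matrix (Fin n) (Fin n) ℝ := Matrix.of fun j i => v i j
  let L : (Fin n → ℝ) →ₗ[ℝ] (Fin n → ℝ) := Matrix.toLin' A
  have hLapply : ∀ y : Fin n → ℝ, L y = ∑ i, y i • v i := by
    intro y
    ext j
    simp only [L, A, Matrix.toLin'_apply, Matrix.mulVec, dotProduct, Matrix.of_apply,
      Finset.sum_apply, Pi.smul_apply, smul_eq_mul]
    exact Finset.sum_congr rfl fun i _ => mul_comm _ _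
  -- integer entries
  have hint : ∀ j i, ∃ z : ℤ, A j i = (z : ℝ) := by
    intro j i
    obtain ⟨z1, hz1⟩ := (hxS i).2 j
    obtain ⟨z2, hz2⟩ := hp₀.2 j
    refine ⟨z1 - z2, ?_⟩
    have : A j i = x i j - p₀ j := by
      simp only [A, Matrix.of_apply]
      rw [hxv i]
      rfl
    rw [this, hz1, hz2]
    push_cast
    ring
  choose zA hzA using hint
  have hAmap : A = (Matrix.of zA).map (Int.cast : ℤ → ℝ) := by
    ext j i
    simp [Matrix.map_apply, hzA]
  have hAdet : A.det = (((Matrix.of zA).det : ℤ) : ℝ) := by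
    rw [hAmap,
      show ((Matrix.of zA).map (Int.cast : ℤ → ℝ)) = (Int.castRingHom ℝ).mapMatrix (Matrix.of zA)
        from rfl, ← RingHom.map_det]
    rfl
  have hdet : A.det ≠ 0 := by
    intro h0
    obtain ⟨c, hc0, hcA⟩ := Matrix.exists_mulVec_eq_zero_iff.mpr h0
    apply hc0
    have hz : ∑ i, c i • v i = 0 := by
      funext j
      have := congrFun hcA j
      simpa only [Matrix.mulVec, dotProduct, A, Matrix.of_apply, Finset.sum_apply,
        Pi.smul_apply, smul_eq_mul, Pi.zero_apply, mul_comm] using this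
    funext i
    exact Fintype.linearIndependent_iff.mp hvli c hz i
  have habs : (1:ℝ) ≤ |A.det| := by
    rw [hAdet]
    have hz : (Matrix.of zA).det ≠ 0 := by
      intro h
      apply hdet
      rw [hAdet, h, Int.cast_zero]
    rw [← Int.cast_abs]
    exact_mod_cast Int.one_le_abs hz
  -- the simplex with vertices p₀, x i lies in K
  have hsub : (fun y => p₀ + L y) '' simT n 1 ⊆ K := by
    rintro _ ⟨y, ⟨hy0, hy1⟩, rfl⟩
    show p₀ + L y ∈ K
    have hrw : p₀ + L y = (1 - ∑ i, y i) • p₀ + ∑ i, y i • x i := by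
      rw [hLapply]
      have h1 : ∑ i, y i • v i = ∑ i, y i • x i - (∑ i, y i) • p₀ := by
        rw [Finset.sum_smul, ← Finset.sum_sub_distrib]
        exact Finset.sum_congr rfl fun i _ => by rw [hxv i, smul_sub]
      rw [h1, sub_smul, one_smul]
      abel
    rw [hrw]
    have hmem := hKconv.sum_mem (t := (Finset.univ : Finset (Fin (n+1))))
      (w := Fin.cons (1 - ∑ i, y i) y) (z := Fin.cons p₀ x)
      (fun i _ => by
        refine Fin.cases ?_ ?_ i
        · simp only [Fin.cons_zero]; linarith
        · intro j; simp only [Fin.cons_succ]; exact hy0 j)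
      (by rw [Fin.sum_univ_succ]; simp only [Fin.cons_zero, Fin.cons_succ]; ring)
      (fun i _ => by
        refine Fin.cases ?_ ?_ i
        · simpa using hp₀.1
        · intro j; simpa using (hxS j).1)
    rw [Fin.sum_univ_succ] at hmem
    simpa only [Fin.cons_zero, Fin.cons_succ] using hmem
  -- volume computation
  have hvolimg : volume ((fun y => p₀ + L y) '' simT n 1)
      = ENNReal.ofReal |A.det| * ENNReal.ofReal (1 / n.factorial) := by
    have himg : (fun y => p₀ + L y) '' simT n 1 = p₀ +ᵥ (⇑L '' simT n 1) := by
      rw [← Set.image_vadd, Set.image_image]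
      rfl
    rw [himg, measure_vadd, Measure.addHaar_image_linearMap, LinearMap.det_toLin',
      simT_volume, if_pos zero_le_one, one_pow]
  have hge : ((n.factorial : ℝ≥0∞))⁻¹ ≤ volume K := by
    have h1 : volume ((fun y => p₀ + L y) '' simT n 1) ≤ volume K := measure_mono hsub
    have hofr : ENNReal.ofReal (1 / n.factorial) = ((n.factorial : ℝ≥0∞))⁻¹ := by
      rw [one_div, ENNReal.ofReal_inv_of_pos (by positivity), ENNReal.ofReal_natCast]
    calc ((n.factorial : ℝ≥0∞))⁻¹ = 1 * ENNReal.ofReal (1 / n.factorial) := by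
          rw [one_mul, hofr]
      _ ≤ ENNReal.ofReal |A.det| * ENNReal.ofReal (1 / n.factorial) := by
          gcongr
          exact ENNReal.one_le_ofReal.mpr habs
      _ = volume ((fun y => p₀ + L y) '' simT n 1) := hvolimg.symm
      _ ≤ volume K := h1
  exact absurd hvol (not_lt.mpr hge)

end
end

section
/- Let K ⊆ ℝ^n be an n-dimensional closed bounded convex set and define K̄ := {x ∈ ℝ^n : x + (1/(4n))(K − K) ⊆ K}. Then there exists an ellipsoid E centered at the origin and a point c ∈ K̄ such that c + (1/2)E ⊆ K̄ and K ⊆ c + nE. -/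
open MeasureTheory ENNReal Pointwise
open Metric Matrix RealInnerProductSpace



set_option maxHeartbeats 1600000 in
/-- Core 2-D inequality for the John ellipsoid enlargement step,
with denominators cleared: `t = (d-N)/(8d)`, `b2 = 1 - 2t/(d-1)`. -/
lemma john_core (N d t b2 x1 s : ℝ) (hN : 1 ≤ N) (hd : N < d)
    (h1 : t * (8 * d) = d - N) (h2 : b2 * (d - 1) = d - 1 - 2 * t)
    (hx : x1 ^ 2 ≤ s) (hs : s ≤ 1) :
    ∃ l : ℝ, 0 ≤ l ∧ l < 1 ∧
      (t + (1 + t) * x1 - l * d) ^ 2 + b2 * (s - x1 ^ 2) ≤ (1 - l) ^ 2 := by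
  have hd1 : 1 < d := lt_of_le_of_lt hN hd
  have hdpos : 0 < d := by linarith
  have hd1pos : 0 < d - 1 := by linarith
  have ht0 : 0 < t := by nlinarith
  have ht8 : t < 1 / 8 := by nlinarith
  have hb2pos : 3 / 4 < b2 := by nlinarith [sq_nonneg (d - 1)]
  have hb2lt : b2 < 1 := by nlinarith
  have h2t : 1 + 2 * t < d := by nlinarith
  set a : ℝ := 1 + t with hadef
  have ha1 : 1 ≤ a := by rw [hadef]; linarith
  set ξ : ℝ := t + a * x1 with hxidef
  have hx1le : x1 ^ 2 ≤ 1 := hx.trans hs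
  have hx1l : -1 ≤ x1 := by nlinarith
  have hx1u : x1 ≤ 1 := by nlinarith
  have hxil : -1 ≤ ξ := by rw [hxidef, hadef]; nlinarith
  have hxiu : ξ < d := by rw [hxidef, hadef]; nlinarith
  set ρ2 : ℝ := b2 * (s - x1 ^ 2) with hρdef
  have hρ0 : 0 ≤ ρ2 := mul_nonneg (by linarith) (by linarith)
  have hE : ρ2 * a ^ 2 ≤ b2 * (a ^ 2 - (ξ - t) ^ 2) := by
    have hsq : (ξ - t) ^ 2 = a ^ 2 * x1 ^ 2 := by rw [hxidef]; ring
    rw [hsq, hρdef]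
    have hba : (0:ℝ) ≤ b2 * a ^ 2 := by nlinarith
    nlinarith [mul_le_mul_of_nonneg_left (show s - x1 ^ 2 ≤ 1 - x1 ^ 2 by linarith) hba]
  have he : (0:ℝ) < d ^ 2 - 1 := by nlinarith
  rcases le_or_gt (d * ξ) 1 with hc | hc
  · -- l = 0 ; need ξ² + ρ2 ≤ 1
    refine ⟨0, le_refl _, by norm_num, ?_⟩
    have hQ1d : 0 ≤ a ^ 2 * (d ^ 2 - 1) - b2 * (a ^ 2 * d ^ 2 - (1 - t * d) ^ 2) := by
      have hfac : (d - 1) * (a ^ 2 * (d ^ 2 - 1) - b2 * (a ^ 2 * d ^ 2 - (1 - t * d) ^ 2))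
          = t ^ 2 * (d + 1) ^ 3 := by
        rw [hadef]; linear_combination (-((1 + t) ^ 2 * d ^ 2 - (1 - t * d) ^ 2)) * h2
      have h4 : 0 ≤ (d - 1) * (a ^ 2 * (d ^ 2 - 1) - b2 * (a ^ 2 * d ^ 2 - (1 - t * d) ^ 2)) := by
        rw [hfac]; positivity
      exact (mul_nonneg_iff_of_pos_left hd1pos).mp h4
    have hP : 0 ≤ a ^ 2 * (1 - ξ ^ 2) - b2 * (a ^ 2 - (ξ - t) ^ 2) := by
      have hiden : d ^ 2 * (d + 1) * (a ^ 2 * (1 - ξ ^ 2) - b2 * (a ^ 2 - (ξ - t) ^ 2))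
          = d * (ξ + 1) * (a ^ 2 * (d ^ 2 - 1) - b2 * (a ^ 2 * d ^ 2 - (1 - t * d) ^ 2))
            + (a ^ 2 - b2) * d * (d + 1) * ((ξ + 1) * (1 - d * ξ)) := by
        rw [hxidef, hadef]; ring
      have hterm1 : 0 ≤ d * (ξ + 1) * (a ^ 2 * (d ^ 2 - 1) - b2 * (a ^ 2 * d ^ 2 - (1 - t * d) ^ 2)) := by
        apply mul_nonneg (mul_nonneg hdpos.le (by linarith)) hQ1d
      have hterm2 : 0 ≤ (a ^ 2 - b2) * d * (d + 1) * ((ξ + 1) * (1 - d * ξ)) := by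
        apply mul_nonneg (mul_nonneg (mul_nonneg (by nlinarith) hdpos.le) (by linarith))
        exact mul_nonneg (by linarith) (by linarith)
      have h4 : 0 ≤ d ^ 2 * (d + 1) * (a ^ 2 * (1 - ξ ^ 2) - b2 * (a ^ 2 - (ξ - t) ^ 2)) := by
        rw [hiden]; linarith
      exact (mul_nonneg_iff_of_pos_left (by positivity)).mp h4
    have h5 : 0 ≤ a ^ 2 * (1 - ξ ^ 2 - ρ2) := by nlinarith [hP, hE]
    have h6 := (mul_nonneg_iff_of_pos_left (show (0:ℝ) < a ^ 2 by nlinarith)).mp h5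
    have : (ξ - 0 * d) ^ 2 + ρ2 ≤ (1 - 0) ^ 2 := by nlinarith [h6]
    simpa using this
  · -- l = (dξ-1)/(d²-1)
    set l : ℝ := (d * ξ - 1) / (d ^ 2 - 1) with hldef
    refine ⟨l, div_nonneg (by linarith) he.le, ?_, ?_⟩
    · rw [hldef, div_lt_one he]; nlinarith
    · have hQ : 0 ≤ (d - 1) * a ^ 2 * (d - ξ) ^ 2 + (d ^ 2 - 1) * (b2 * (d - 1)) * (ξ - t) ^ 2
          - (d ^ 2 - 1) * (b2 * (d - 1)) * a ^ 2 := by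
        set A' : ℝ := (1 + t) ^ 2 * (d - 1) + (d ^ 2 - 1) * (d - 1 - 2 * t) with hA'
        set B' : ℝ := -2 * ((1 + t) ^ 2 * d * (d - 1) + (d ^ 2 - 1) * (d - 1 - 2 * t) * t) with hB'
        have hA'pos : 0 < A' := by rw [hA']; nlinarith
        have hiden : 4 * A' * ((d - 1) * (1 + t) ^ 2 * (d - ξ) ^ 2
              + (d ^ 2 - 1) * (d - 1 - 2 * t) * (ξ - t) ^ 2
              - (d ^ 2 - 1) * (d - 1 - 2 * t) * (1 + t) ^ 2)
            = (2 * A' * ξ + B') ^ 2 := by rw [hA', hB']; ring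
        rw [h2, hadef]
        have h4 : 0 ≤ 4 * A' * ((d - 1) * (1 + t) ^ 2 * (d - ξ) ^ 2
              + (d ^ 2 - 1) * (d - 1 - 2 * t) * (ξ - t) ^ 2
              - (d ^ 2 - 1) * (d - 1 - 2 * t) * (1 + t) ^ 2) := by
          rw [hiden]; positivity
        have := (mul_nonneg_iff_of_pos_left (show (0:ℝ) < 4 * A' by linarith)).mp h4
        linarith
      have key : ρ2 * (d ^ 2 - 1) ≤ (d - ξ) ^ 2 := by
        have hE' := mul_le_mul_of_nonneg_right hE (mul_nonneg he.le hd1pos.le)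
        have c1 : ρ2 * (d ^ 2 - 1) * ((d - 1) * a ^ 2) ≤ (d - ξ) ^ 2 * ((d - 1) * a ^ 2) := by
          nlinarith [hE', hQ]
        exact le_of_mul_le_mul_right c1 (by positivity)
      have hdiff : (1 - l) ^ 2 - ((ξ - l * d) ^ 2 + ρ2)
          = ((d - ξ) ^ 2 - ρ2 * (d ^ 2 - 1)) / (d ^ 2 - 1) := by
        rw [hldef]; field_simp; ring
      have : 0 ≤ ((d - ξ) ^ 2 - ρ2 * (d ^ 2 - 1)) / (d ^ 2 - 1) :=
        div_nonneg (by linarith) he.le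
      linarith [hdiff ▸ this]


set_option maxHeartbeats 1600000 in

/-- Volume gain for the enlarged ellipsoid: `(1+t)² b2^(n-1) > 1`. -/
lemma john_vol (n : ℕ) (hn : 1 ≤ n) (d t b2 : ℝ) (hd : (n : ℝ) < d)
    (h1 : t * (8 * d) = d - n) (h2 : b2 * (d - 1) = d - 1 - 2 * t) :
    1 < (1 + t) ^ 2 * b2 ^ (n - 1) := by
  have hN : (1:ℝ) ≤ (n:ℝ) := by exact_mod_cast hn
  have hd1 : 1 < d := lt_of_le_of_lt hN hd
  have hdpos : 0 < d := by linarith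
  have hd1pos : 0 < d - 1 := by linarith
  have ht0 : 0 < t := by nlinarith
  have ht8 : t < 1 / 8 := by nlinarith
  have hb2pos : 3 / 4 < b2 := by nlinarith [sq_nonneg (d - 1)]
  set m : ℝ := (n : ℝ) - 1 with hm
  have hm0 : 0 ≤ m := by rw [hm]; linarith
  have hmd : m < d - 1 := by rw [hm]; linarith
  have hcast : ((n - 1 : ℕ) : ℝ) = m := by
    rw [hm, Nat.cast_sub hn]; norm_num
  have hbern : 1 + m * (b2 - 1) ≤ b2 ^ (n - 1) := by
    have := one_add_mul_le_pow (show (-2:ℝ) ≤ b2 - 1 by linarith) (n - 1)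
    rw [hcast] at this
    have hb : 1 + (b2 - 1) = b2 := by ring
    rwa [hb] at this
  have hkey : 1 < (1 + t) ^ 2 * (1 + m * (b2 - 1)) := by
    have hrel : m * (b2 - 1) * (d - 1) = -(2 * m * t) := by
      nlinarith [h2]
    -- suffices (2+t)(d-1) > 2m(1+t)^2
    have hstep : 2 * m * (1 + t) ^ 2 < (2 + t) * (d - 1) := by
      have hmt : m * t < (d - 1) * t := by
        exact mul_lt_mul_of_pos_right hmd ht0
      have hmt2 : m * t ^ 2 ≤ (d - 1) * t ^ 2 := by nlinarith
      have h8 : 8 * d * t = d - 1 - m := by rw [hm]; linarith [h1]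
      nlinarith [mul_pos hdpos ht0, mul_pos (mul_pos hdpos ht0) ht0]
    -- multiply out: ((1+t)^2 (1+m(b2-1)) - 1)(d-1) = ((1+t)^2 - 1)(d-1) - 2mt(1+t)^2 > 0
    have hexp : ((1 + t) ^ 2 * (1 + m * (b2 - 1)) - 1) * (d - 1)
        = ((1 + t) ^ 2 - 1) * (d - 1) - 2 * m * t * (1 + t) ^ 2 := by
      linear_combination (1 + t) ^ 2 * hrel
    have hpos : 0 < ((1 + t) ^ 2 * (1 + m * (b2 - 1)) - 1) * (d - 1) := by
      rw [hexp]; nlinarith [hstep, mul_pos ht0 hd1pos]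
    nlinarith [hpos, hd1pos]
  calc (1:ℝ) < (1 + t) ^ 2 * (1 + m * (b2 - 1)) := hkey
  _ ≤ (1 + t) ^ 2 * b2 ^ (n - 1) := by
    apply mul_le_mul_of_nonneg_left hbern (by positivity)



lemma john_det (n : ℕ) (hn : 1 ≤ n) (v : EuclideanSpace ℝ (Fin n)) (hv : ‖v‖ = 1)
    (α β : ℝ) (hβ : β ≠ 0) :
    LinearMap.det ((β • (ContinuousLinearMap.id ℝ (EuclideanSpace ℝ (Fin n)))
        + (α - β) • ((innerSL ℝ v).smulRight v) : EuclideanSpace ℝ (Fin n) →L[ℝ] EuclideanSpace ℝ (Fin n))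
        : EuclideanSpace ℝ (Fin n) →ₗ[ℝ] EuclideanSpace ℝ (Fin n)) = α * β ^ (n - 1) := by
  set b := (EuclideanSpace.basisFun (Fin n) ℝ).toBasis with hb
  set D : EuclideanSpace ℝ (Fin n) →L[ℝ] EuclideanSpace ℝ (Fin n) :=
    β • (ContinuousLinearMap.id ℝ (EuclideanSpace ℝ (Fin n)))
      + (α - β) • ((innerSL ℝ v).smulRight v) with hD
  have hvv : ∑ i, v i * v i = 1 := by
    have := real_inner_self_eq_norm_sq v
    rw [hv, PiLp.inner_apply] at this
    simpa [← sq] using this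
  rw [← LinearMap.det_toMatrix b]
  have hM : LinearMap.toMatrix b b (D : EuclideanSpace ℝ (Fin n) →ₗ[ℝ] EuclideanSpace ℝ (Fin n))
      = β • (1 + Matrix.replicateCol Unit (((α - β)/β) • (v : Fin n → ℝ)) * Matrix.replicateRow Unit (v : Fin n → ℝ)) := by
    ext i j
    rw [LinearMap.toMatrix_apply]
    simp only [ContinuousLinearMap.coe_coe]
    have hbj : ⟪v, b j⟫ = v j := by
      rw [hb, OrthonormalBasis.coe_toBasis, PiLp.inner_apply]
      simp [EuclideanSpace.basisFun_apply, EuclideanSpace.single_apply]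
    have : D (b j) = β • (b j) + ((α - β) * v j) • v := by
      rw [hD]; simp [hbj, smul_smul]
    rw [this]
    rw [hb]
    simp [OrthonormalBasis.coe_toBasis_repr_apply, OrthonormalBasis.repr_apply_apply,
      PiLp.inner_apply, EuclideanSpace.basisFun_apply, EuclideanSpace.single_apply,
      Matrix.one_apply, ← Matrix.vecMulVec_eq, Matrix.vecMulVec_apply]
    rcases eq_or_ne i j with h | h
    · subst h; simp; field_simp
    · simp [h, Ne.symm h]; field_simp
  rw [hM, Matrix.det_smul, Matrix.det_one_add_replicateCol_mul_replicateRow]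
  have : (v : Fin n → ℝ) ⬝ᵥ (((α - β)/β) • (v : Fin n → ℝ)) = (α - β)/β := by
    simp only [dotProduct, Pi.smul_apply, smul_eq_mul]
    calc ∑ i, v i * ((α - β)/β * v i) = (α - β)/β * ∑ i, v i * v i := by
          rw [Finset.mul_sum]; exact Finset.sum_congr rfl (fun i _ => by ring)
    _ = (α - β)/β := by rw [hvv, mul_one]
  rw [this]
  have hn' : β ^ n = β * β ^ (n-1) := by
    conv_lhs => rw [show n = 1 + (n-1) by omega]
    rw [pow_add, pow_one]
  rw [Fintype.card_fin, hn']
  field_simp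
  ring


section John
variable {n : ℕ}
local notation "V" => EuclideanSpace ℝ (Fin n)

set_option maxHeartbeats 1600000 in
theorem john_ellipsoid (hn : 1 ≤ n) (K : Set (EuclideanSpace ℝ (Fin n)))
    (hKclosed : IsClosed K) (hKbdd : Bornology.IsBounded K) (hKconv : Convex ℝ K)
    (hKint : (interior K).Nonempty) :
    ∃ (L : EuclideanSpace ℝ (Fin n) ≃ₗ[ℝ] EuclideanSpace ℝ (Fin n))
      (c : EuclideanSpace ℝ (Fin n)),
      (∀ x, ‖x‖ ≤ 1 → c + L x ∈ K) ∧ (∀ y ∈ K, ‖L.symm (y - c)‖ ≤ n) := by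
  classical
  set S : Set (V × (V →L[ℝ] V)) := {p | ∀ x : V, ‖x‖ ≤ 1 → p.1 + p.2 x ∈ K} with hSdef
  have hmemK : ∀ p ∈ S, p.1 ∈ K := by
    intro p hp
    have := hp 0 (by simp)
    simpa using this
  -- S is closed
  have hSclosed : IsClosed S := by
    have : S = ⋂ (x : {x : V // ‖x‖ ≤ 1}),
        {p : V × (V →L[ℝ] V) | p.1 + p.2 x.1 ∈ K} := by
      ext p; simp only [hSdef, Set.mem_setOf_eq, Set.mem_iInter, Subtype.forall]
    rw [this]
    refine isClosed_iInter fun x => IsClosed.preimage ?_ hKclosed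
    exact continuous_fst.add ((ContinuousLinearMap.apply ℝ V x.1).continuous.comp continuous_snd)
  -- S is bounded
  obtain ⟨R, hR⟩ : ∃ r, K ⊆ closedBall 0 r := hKbdd.subset_closedBall 0
  have hSbdd : Bornology.IsBounded S := by
    apply Bornology.IsBounded.subset
      ((isBounded_closedBall (x := (0:V)) (r := R)).prod
        (isBounded_closedBall (x := (0 : V →L[ℝ] V)) (r := 2 * R)))
    rintro ⟨c, T⟩ hp
    have hcR : ‖c‖ ≤ R := by simpa using hR (hmemK _ hp)
    have hR0 : 0 ≤ R := le_trans (norm_nonneg c) hcR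
    constructor
    · simpa using hcR
    · simp only [mem_closedBall, dist_zero_right]
      apply ContinuousLinearMap.opNorm_le_bound _ (by linarith)
      intro x
      rcases eq_or_lt_of_le (norm_nonneg x) with h0 | h0
      · simp [← h0, norm_le_zero_iff.mp h0.symm.le]
      · have hu : ‖(‖x‖⁻¹ • x : V)‖ ≤ 1 := by
          rw [norm_smul, norm_inv, norm_norm]
          rw [inv_mul_cancel₀ h0.ne']
        have h1 : ‖T (‖x‖⁻¹ • x)‖ ≤ 2 * R := by
          have hm := hp _ hu
          have h2 : ‖c + T (‖x‖⁻¹ • x)‖ ≤ R := by simpa using hR hm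
          calc ‖T (‖x‖⁻¹ • x)‖ = ‖(c + T (‖x‖⁻¹ • x)) - c‖ := by rw [add_sub_cancel_left]
          _ ≤ ‖c + T (‖x‖⁻¹ • x)‖ + ‖c‖ := norm_sub_le _ _
          _ ≤ 2 * R := by linarith
        have : T x = ‖x‖ • T (‖x‖⁻¹ • x) := by
          rw [← _root_.map_smul, smul_smul, mul_inv_cancel₀ h0.ne', one_smul]
        rw [this, norm_smul, norm_norm]
        calc ‖x‖ * ‖T (‖x‖⁻¹ • x)‖ ≤ ‖x‖ * (2 * R) :=
          mul_le_mul_of_nonneg_left h1 (norm_nonneg x)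
        _ = 2 * R * ‖x‖ := by ring
  -- compactness, nonemptiness, maximizer
  haveI : ProperSpace (V × (V →L[ℝ] V)) := by infer_instance
  have hScpt : IsCompact S := Metric.isCompact_of_isClosed_isBounded hSclosed hSbdd
  obtain ⟨z, hz⟩ := hKint
  obtain ⟨ε, hε, hball⟩ := Metric.isOpen_iff.mp isOpen_interior z hz
  have hp₀ : (⟨z, (ε/2) • ContinuousLinearMap.id ℝ V⟩ : V × (V →L[ℝ] V)) ∈ S := by
    intro x hx
    apply interior_subset
    apply hball
    simp only [mem_ball, ContinuousLinearMap.coe_smul', ContinuousLinearMap.coe_id',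
      Pi.smul_apply, id_eq, dist_self_add_left]
    rw [norm_smul]
    have : |ε/2| * ‖x‖ ≤ (ε/2) * 1 := by
      rw [abs_of_pos (by linarith)]
      exact mul_le_mul_of_nonneg_left hx (by linarith)
    simp only [Real.norm_eq_abs]
    linarith
  obtain ⟨p, hpS, hpmax⟩ := hScpt.exists_isMaxOn ⟨_, hp₀⟩
    ((ContinuousLinearMap.continuous_det.comp continuous_snd).abs.continuousOn)
  obtain ⟨c, T⟩ := p
  have hdetlb : (ε/2)^n ≤ |T.det| := by
    have h := hpmax hp₀
    simp only [Function.comp] at h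
    have hdet0 : ((ε/2) • ContinuousLinearMap.id ℝ V).det = (ε/2)^n := by
      show LinearMap.det _ = _
      rw [ContinuousLinearMap.coe_smul, ContinuousLinearMap.coe_id, LinearMap.det_smul,
        LinearMap.det_id, finrank_euclideanSpace_fin, mul_one]
    simp only [Set.mem_setOf_eq] at h
    rw [hdet0] at h
    calc (ε/2)^n = |(ε/2)^n| := (abs_of_pos (by positivity)).symm
    _ ≤ _ := h
  have hTdet : T.det ≠ 0 := by
    intro h0
    have : (0:ℝ) < (ε/2)^n := by positivity
    rw [h0] at hdetlb
    simp at hdetlb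
    linarith
  have hTabs : 0 < |T.det| := abs_pos.mpr hTdet
  set L : V ≃ₗ[ℝ] V := LinearMap.equivOfDetNeZero (T : V →ₗ[ℝ] V) hTdet with hLdef
  have hLco : ∀ u : V, L u = T u := by
    intro u
    have : (L : V →ₗ[ℝ] V) = (T : V →ₗ[ℝ] V) := LinearEquiv.coe_ofIsUnitDet _
    exact DFunLike.congr_fun this u
  refine ⟨L, c, ?_, ?_⟩
  · intro x hx
    rw [hLco]
    exact hpS x hx
  · -- every point of K is within distance n in the L-metric
    intro y hyK
    by_contra hcon
    push_neg at hcon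
    set q : V := L.symm (y - c) with hq
    set d : ℝ := ‖q‖ with hdd
    have hNle : (1:ℝ) ≤ (n:ℝ) := by exact_mod_cast hn
    have hnd : (n:ℝ) < d := hcon
    have hd1 : (1:ℝ) < d := lt_of_le_of_lt hNle hnd
    have hdpos : (0:ℝ) < d := by linarith
    set v : V := d⁻¹ • q with hv
    have hvnorm : ‖v‖ = 1 := by
      rw [hv, norm_smul, norm_inv, Real.norm_eq_abs, abs_of_pos hdpos, ← hdd]
      field_simp
    obtain ⟨t, b2, h1, h2⟩ : ∃ t b2 : ℝ, t * (8*d) = d - n ∧ b2 * (d-1) = d - 1 - 2*t := by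
      refine ⟨(d - n)/(8*d), (1 - 2*((d - n)/(8*d))/(d-1)), by field_simp, ?_⟩
      have hd1ne : d - 1 ≠ 0 := by linarith
      field_simp
    have ht0 : 0 < t := by nlinarith
    have hb2pos : 3/4 < b2 := by nlinarith [sq_nonneg (d-1)]
    set β : ℝ := Real.sqrt b2 with hβdef
    have hβpos : 0 < β := Real.sqrt_pos.mpr (by linarith)
    have hβsq : β^2 = b2 := Real.sq_sqrt (by linarith)
    set α : ℝ := 1 + t with hαdef
    obtain ⟨D, hD⟩ : ∃ D : V →L[ℝ] V, D = β • ContinuousLinearMap.id ℝ V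
        + (α - β) • ((innerSL ℝ v).smulRight v) := ⟨_, rfl⟩
    have hDdet : LinearMap.det (D : V →ₗ[ℝ] V) = α * β^(n-1) := by
      rw [hD]; exact john_det n hn v hvnorm α β hβpos.ne'
    have hqd : d • v = q := by rw [hv, smul_smul, mul_inv_cancel₀ hdpos.ne', one_smul]
    have hTq : c + T q = y := by
      rw [← hLco, hq, L.apply_symm_apply]; abel
    have hvv : ⟪v, v⟫ = 1 := by
      have h := real_inner_self_eq_norm_mul_norm v
      rw [hvnorm] at h; rw [h]; norm_num
    have hmemS : (c + T (t • v), T.comp D) ∈ S := by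
      intro x hx
      set x1 : ℝ := ⟪v, x⟫ with hx1def
      have hx1 : x1^2 ≤ ‖x‖^2 := by
        have h := abs_real_inner_le_norm v x
        rw [hvnorm, one_mul] at h
        calc x1^2 = |x1|^2 := (sq_abs _).symm
        _ ≤ ‖x‖^2 := pow_le_pow_left₀ (abs_nonneg _) h 2
      have hs1 : ‖x‖^2 ≤ 1 := by nlinarith [norm_nonneg x]
      obtain ⟨l, hl0, hl1, hineq⟩ := john_core n d t b2 x1 (‖x‖^2) hNle hnd h1 h2 hx1 hs1
      have hDx : D x = β • x + ((α - β) * x1) • v := by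
        rw [hD]
        simp only [ContinuousLinearMap.add_apply, ContinuousLinearMap.coe_smul',
          Pi.smul_apply, ContinuousLinearMap.coe_id', id_eq,
          ContinuousLinearMap.smulRight_apply, innerSL_apply_apply]
        rw [smul_smul]
      have hsplit : t • v + D x - l • q = (t + α*x1 - l*d) • v + β • (x - x1 • v) := by
        rw [hDx, ← hqd]; module
      have horth : ⟪(t + α*x1 - l*d) • v, β • (x - x1 • v)⟫ = 0 := by
        rw [real_inner_smul_left, real_inner_smul_right, inner_sub_right,
          real_inner_smul_right, hvv, ← hx1def]
        ring
      have hz1 : ‖(t + α*x1 - l*d) • v‖^2 = (t + α*x1 - l*d)^2 := by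
        rw [norm_smul, hvnorm, mul_one, Real.norm_eq_abs, sq_abs]
      have hz2 : ‖x - x1 • v‖^2 = ‖x‖^2 - x1^2 := by
        have hxv : ⟪x, v⟫ = x1 := by rw [hx1def]; exact real_inner_comm v x
        rw [norm_sub_sq_real, real_inner_smul_right, hxv,
          norm_smul, hvnorm, mul_one, Real.norm_eq_abs, sq_abs]
        ring
      have hz3 : ‖β • (x - x1 • v)‖^2 = b2 * (‖x‖^2 - x1^2) := by
        rw [norm_smul, mul_pow, Real.norm_eq_abs, sq_abs, hβsq, hz2]
      have hnormsq : ‖t • v + D x - l • q‖^2 = (t + α*x1 - l*d)^2 + b2*(‖x‖^2 - x1^2) := by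
        rw [hsplit, norm_add_sq_real, horth, hz1, hz3]; ring
      have h1l : (0:ℝ) < 1 - l := by linarith
      have hle : ‖t • v + D x - l • q‖ ≤ 1 - l := by
        have hineq' : (t + α*x1 - l*d)^2 + b2*(‖x‖^2 - x1^2) ≤ (1-l)^2 := by
          rw [hαdef]; exact hineq
        nlinarith [norm_nonneg (t • v + D x - l • q), hnormsq]
      obtain ⟨w, hw⟩ : ∃ w : V, w = (1 - l)⁻¹ • (t • v + D x - l • q) := ⟨_, rfl⟩
      have hwnorm : ‖w‖ ≤ 1 := by
        rw [hw, norm_smul, norm_inv, Real.norm_eq_abs, abs_of_pos h1l]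
        calc (1-l)⁻¹ * ‖t • v + D x - l • q‖ ≤ (1-l)⁻¹ * (1-l) :=
          mul_le_mul_of_nonneg_left hle (by positivity)
        _ = 1 := inv_mul_cancel₀ h1l.ne'
      have hrecon : t • v + D x = l • q + (1 - l) • w := by
        rw [hw, smul_smul (1-l) (1-l)⁻¹ (t • v + D x - l • q), mul_inv_cancel₀ h1l.ne', one_smul]
        abel
      show (c + T (t • v)) + (T.comp D) x ∈ K
      have hkey : (c + T (t • v)) + (T.comp D) x = l • (c + T q) + (1 - l) • (c + T w) := by
        simp only [ContinuousLinearMap.comp_apply]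
        calc c + T (t • v) + T (D x) = c + T (t • v + D x) := by rw [map_add]; abel
        _ = c + T (l • q + (1-l) • w) := by rw [hrecon]
        _ = c + (l • T q + (1-l) • T w) := by
              rw [map_add, _root_.map_smul, _root_.map_smul]
        _ = l • (c + T q) + (1 - l) • (c + T w) := by module
      rw [hkey, hTq]
      exact hKconv hyK (hpS w hwnorm) hl0 (by linarith) (by ring)
    -- determinant contradiction
    have hmax' := hpmax hmemS
    simp only [Set.mem_setOf_eq, Function.comp] at hmax'
    have hcompdet : (T.comp D).det = T.det * (α * β^(n-1)) := by
      show LinearMap.det _ = _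
      rw [ContinuousLinearMap.toLinearMap_comp, LinearMap.det_comp, hDdet]
    have hvol : 1 < α^2 * b2^(n-1) := by
      rw [hαdef]; exact john_vol n hn d t b2 hnd h1 h2
    have hBB : (β^(n-1))^2 = b2^(n-1) := by
      rw [← pow_mul, mul_comm (n-1) 2, pow_mul, hβsq]
    have hgt1 : 1 < |α * β^(n-1)| := by
      have hsq2 : (α * β^(n-1))^2 = α^2 * b2^(n-1) := by rw [mul_pow, hBB]
      nlinarith [sq_abs (α * β^(n-1)), abs_nonneg (α * β^(n-1))]
    rw [hcompdet, abs_mul] at hmax'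
    nlinarith [hTabs, hgt1, hmax']


end John


/-- An ellipsoid centered at the origin: the image of the closed unit
Euclidean ball under an invertible linear map. -/
def IsOriginEllipsoid {n : ℕ} (E : Set (EuclideanSpace ℝ (Fin n))) : Prop :=
  ∃ L : EuclideanSpace ℝ (Fin n) ≃ₗ[ℝ] EuclideanSpace ℝ (Fin n),
    E = ⇑L '' Metric.closedBall 0 1

theorem stmt3 {n : ℕ} (hn : 1 ≤ n) (K : Set (EuclideanSpace ℝ (Fin n)))
    (hKclosed : IsClosed K) (hKbdd : Bornology.IsBounded K)
    (hKconv : Convex ℝ K) (hKint : (interior K).Nonempty)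
    (Kbar : Set (EuclideanSpace ℝ (Fin n)))
    (hKbar : Kbar = {x | x +ᵥ (1 / (4 * n) : ℝ) • (K - K) ⊆ K}) :
    ∃ (E : Set (EuclideanSpace ℝ (Fin n))) (c : EuclideanSpace ℝ (Fin n)),
      IsOriginEllipsoid E ∧ c ∈ Kbar ∧
      c +ᵥ (1 / 2 : ℝ) • E ⊆ Kbar ∧ K ⊆ c +ᵥ (n : ℝ) • E := by
  subst hKbar
  obtain ⟨L, c, hIn, hOut⟩ := john_ellipsoid hn K hKclosed hKbdd hKconv hKint
  have hnpos : (0:ℝ) < n := by exact_mod_cast hn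
  set Eset : Set (EuclideanSpace ℝ (Fin n)) := ⇑L '' Metric.closedBall 0 1 with hEdef
  have hrep : ∀ y ∈ K, ∃ u : (EuclideanSpace ℝ (Fin n)), ‖u‖ ≤ n ∧ y = c + L u := by
    intro y hy
    refine ⟨L.symm (y - c), hOut y hy, ?_⟩
    rw [L.apply_symm_apply]; abel
  -- elements of the scaled difference body
  have hsmall : ∀ z ∈ (1 / (4 * (n:ℝ))) • (K - K), ∃ u : (EuclideanSpace ℝ (Fin n)), ‖u‖ ≤ 1/2 ∧ z = L u := by
    intro z hz
    obtain ⟨z', hz', hzz⟩ := Set.mem_smul_set.mp hz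
    obtain ⟨k₁, hk₁, k₂, hk₂, hk⟩ := Set.mem_sub.mp hz'
    obtain ⟨u₁, hu₁, he₁⟩ := hrep k₁ hk₁
    obtain ⟨u₂, hu₂, he₂⟩ := hrep k₂ hk₂
    refine ⟨(1 / (4 * (n:ℝ))) • (u₁ - u₂), ?_, ?_⟩
    · rw [norm_smul, Real.norm_eq_abs, abs_of_pos (by positivity)]
      have hnn : ‖u₁ - u₂‖ ≤ 2 * n := le_trans (norm_sub_le _ _) (by linarith)
      calc 1 / (4 * (n:ℝ)) * ‖u₁ - u₂‖ ≤ 1 / (4 * (n:ℝ)) * (2 * n) := by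
            apply mul_le_mul_of_nonneg_left hnn (by positivity)
      _ = 1/2 := by field_simp; ring
    · rw [_root_.map_smul, map_sub, ← hzz, ← hk, he₁, he₂]
      congr 1; abel
  -- membership criterion for Kbar
  have hKbarMem : ∀ w : (EuclideanSpace ℝ (Fin n)), (∀ u : (EuclideanSpace ℝ (Fin n)), ‖u‖ ≤ 1/2 → w + L u ∈ K) →
      w ∈ {x : (EuclideanSpace ℝ (Fin n)) | x +ᵥ (1 / (4 * n) : ℝ) • (K - K) ⊆ K} := by
    intro w hw
    intro w' hw'
    obtain ⟨z, hz, hwz⟩ := Set.mem_vadd_set.mp hw'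
    obtain ⟨u, hu, hzu⟩ := hsmall z hz
    rw [← hwz, vadd_eq_add, hzu]
    exact hw u hu
  refine ⟨Eset, c, ⟨L, rfl⟩, ?_, ?_, ?_⟩
  · -- c ∈ Kbar
    apply hKbarMem
    intro u hu
    exact hIn u (by linarith)
  · -- c +ᵥ (1/2) Eset ⊆ Kbar
    intro w hw
    obtain ⟨e, he, hwe⟩ := Set.mem_vadd_set.mp hw
    obtain ⟨e', he', hee⟩ := Set.mem_smul_set.mp he
    obtain ⟨u₀, hu₀, hee'⟩ := he'
    simp only [Metric.mem_closedBall, dist_zero_right] at hu₀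
    apply hKbarMem
    intro u hu
    have hware : w + L u = c + L ((1/2 : ℝ) • u₀ + u) := by
      rw [← hwe, vadd_eq_add, ← hee, ← hee', map_add, _root_.map_smul]
      abel
    rw [hware]
    apply hIn
    have h12 : ‖(1/2 : ℝ) • u₀‖ ≤ 1/2 := by
      rw [norm_smul, Real.norm_eq_abs, abs_of_pos (by norm_num : (0:ℝ) < 1/2)]
      linarith [hu₀]
    calc ‖(1/2 : ℝ) • u₀ + u‖ ≤ ‖(1/2 : ℝ) • u₀‖ + ‖u‖ := norm_add_le _ _
    _ ≤ 1/2 + 1/2 := add_le_add h12 hu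
    _ = 1 := by norm_num
  · -- K ⊆ c +ᵥ n • Eset
    intro y hy
    obtain ⟨u, hu, hyu⟩ := hrep y hy
    rw [Set.mem_vadd_set]
    refine ⟨L u, ?_, by rw [vadd_eq_add, ← hyu]⟩
    rw [Set.mem_smul_set]
    refine ⟨L ((n:ℝ)⁻¹ • u), ⟨(n:ℝ)⁻¹ • u, ?_, rfl⟩, ?_⟩
    · simp only [Metric.mem_closedBall, dist_zero_right]
      rw [norm_smul, Real.norm_eq_abs, abs_of_pos (by positivity)]
      calc (n:ℝ)⁻¹ * ‖u‖ ≤ (n:ℝ)⁻¹ * n := mul_le_mul_of_nonneg_left hu (by positivity)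
      _ = 1 := inv_mul_cancel₀ hnpos.ne'
    · rw [← _root_.map_smul, smul_smul, mul_inv_cancel₀ hnpos.ne', one_smul]
end

section
/- Let K ⊆ ℝ^n be an n-dimensional compact convex set, let K̄ := {x : x + (1/(4n))(K − K) ⊆ K}, let x* ∈ K̄, and let H⁺ be a closed half-space whose boundary hyperplane contains x*. Then vol(K ∩ H⁺) ≤ (1 − 1/(n^n · 2^{n+1})) · vol(K). -/
open MeasureTheory ENNReal Pointwise Set

namespace BMX
variable {n : ℕ}

abbrev Box (n : ℕ) := (Fin n → ℝ) × (Fin n → ℝ)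

def bset (b : Box n) : Set (Fin n → ℝ) := Set.Icc b.1 b.2

def nondeg (b : Box n) : Prop := ∀ i, b.1 i < b.2 i

noncomputable instance : DecidablePred (nondeg (n := n)) :=
  fun _ => Fintype.decidableForallFintype

def Sep (b c : Box n) : Prop := ∃ i, b.2 i ≤ c.1 i ∨ c.2 i ≤ b.1 i

def U (L : List (Box n)) : Set (Fin n → ℝ) := ⋃ b ∈ L, bset b

def Good (L : List (Box n)) : Prop := (∀ b ∈ L, nondeg b) ∧ L.Pairwise Sep

@[simp] lemma U_nil : U (n := n) [] = ∅ := by simp [U]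

@[simp] lemma U_cons (b : Box n) (L : List (Box n)) : U (b :: L) = bset b ∪ U L := by
  simp [U]

lemma measurable_bset (b : Box n) : MeasurableSet (bset b) := measurableSet_Icc

lemma measurable_U (L : List (Box n)) : MeasurableSet (U L) :=
  .biUnion L.finite_toSet.countable fun b _ => measurable_bset b

lemma vol_bset (b : Box n) : volume (bset b) = ∏ i, ENNReal.ofReal (b.2 i - b.1 i) :=
  Real.volume_Icc_pi

lemma vol_bset_pos (b : Box n) (hb : nondeg b) : 0 < volume (bset b) := by
  rw [vol_bset]
  exact CanonicallyOrderedAdd.prod_pos.2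
    fun i _ => ENNReal.ofReal_pos.2 (sub_pos.2 (hb i))

lemma vol_bset_ne_top (b : Box n) : volume (bset b) ≠ ⊤ := by
  rw [vol_bset]
  exact (prod_lt_top fun i _ => ofReal_lt_top).ne

lemma vol_U_ne_top (L : List (Box n)) : volume (U L) ≠ ⊤ := by
  induction L with
  | nil => simp
  | cons b L ih =>
      rw [U_cons]
      exact ((measure_union_le _ _).trans_lt
        (ENNReal.add_lt_top.2 ⟨(vol_bset_ne_top b).lt_top, ih.lt_top⟩)).ne

lemma U_pos (L : List (Box n)) (hL : Good L) (hne : L ≠ []) : 0 < volume (U L) := by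
  obtain ⟨b, hb⟩ := List.exists_mem_of_ne_nil L hne
  exact (vol_bset_pos b (hL.1 b hb)).trans_le
    (measure_mono (subset_biUnion_of_mem (u := bset) hb))

lemma U_eq_empty_vol (L : List (Box n)) (hL : Good L) (h0 : volume (U L) = 0) : L = [] := by
  by_contra h
  exact absurd h0 (U_pos L hL h).ne'
lemma oneD {a b c d z : ℝ} (hab : a ≤ b) (hcd : c ≤ d) (h1 : a + c ≤ z) (h2 : z ≤ b + d) :
    a ≤ max a (z - d) ∧ max a (z - d) ≤ b ∧ c ≤ z - max a (z - d) ∧ z - max a (z - d) ≤ d := by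
  rcases max_cases a (z - d) with ⟨h, h'⟩ | ⟨h, h'⟩ <;> rw [h] <;>
    refine ⟨by linarith, by linarith, by linarith, by linarith⟩

lemma Icc_add_Icc_pi {a b c d : Fin n → ℝ} (hab : a ≤ b) (hcd : c ≤ d) :
    Icc a b + Icc c d = Icc (a + c) (b + d) := by
  apply Subset.antisymm
  · rintro z ⟨x, hx, y, hy, rfl⟩
    exact ⟨add_le_add hx.1 hy.1, add_le_add hx.2 hy.2⟩
  · intro z hz
    refine ⟨fun i => max (a i) (z i - d i), ⟨fun i => ?_, fun i => ?_⟩,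
      fun i => z i - max (a i) (z i - d i), ⟨fun i => ?_, fun i => ?_⟩, by ext i; simp⟩
    exacts [(oneD (hab i) (hcd i) (hz.1 i) (hz.2 i)).1,
      (oneD (hab i) (hcd i) (hz.1 i) (hz.2 i)).2.1,
      (oneD (hab i) (hcd i) (hz.1 i) (hz.2 i)).2.2.1,
      (oneD (hab i) (hcd i) (hz.1 i) (hz.2 i)).2.2.2]

def bsum (b c : Box n) : Box n := (b.1 + c.1, b.2 + c.2)

lemma bset_add {b c : Box n} (hb : b.1 ≤ b.2) (hc : c.1 ≤ c.2) :
    bset b + bset c = bset (bsum b c) := Icc_add_Icc_pi hb hc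

def addL (L M : List (Box n)) : List (Box n) := L.flatMap fun b => M.map (bsum b)

lemma mem_addL {L M : List (Box n)} {x : Box n} :
    x ∈ addL L M ↔ ∃ b ∈ L, ∃ c ∈ M, bsum b c = x := by
  simp [addL]

lemma nondeg_le {b : Box n} (hb : nondeg b) : b.1 ≤ b.2 := fun i => (hb i).le

lemma U_addL {L M : List (Box n)} (hL : ∀ b ∈ L, nondeg b) (hM : ∀ c ∈ M, nondeg c) :
    U L + U M = U (addL L M) := by
  ext z
  constructor
  · rintro ⟨x, hx, y, hy, rfl⟩
    simp only [U, mem_iUnion, exists_prop] at hx hy ⊢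
    obtain ⟨b, hb, hxb⟩ := hx
    obtain ⟨c, hc, hyc⟩ := hy
    exact ⟨bsum b c, mem_addL.2 ⟨b, hb, c, hc, rfl⟩, by
      rw [← bset_add (nondeg_le (hL b hb)) (nondeg_le (hM c hc))]
      exact add_mem_add hxb hyc⟩
  · intro hz
    simp only [U, mem_iUnion, exists_prop] at hz
    obtain ⟨d, hd, hzd⟩ := hz
    obtain ⟨b, hb, c, hc, rfl⟩ := mem_addL.1 hd
    rw [← bset_add (nondeg_le (hL b hb)) (nondeg_le (hM c hc))] at hzd
    obtain ⟨x, hx, y, hy, rfl⟩ := hzd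
    exact add_mem_add (Set.mem_biUnion hb hx) (Set.mem_biUnion hc hy)

def lmap (w : Fin n → ℝ) : (Fin n → ℝ) →ₗ[ℝ] ℝ where
  toFun x := ∑ j, w j * x j
  map_add' x y := by simp [mul_add, Finset.sum_add_distrib]
  map_smul' r x := by
    simp only [Pi.smul_apply, smul_eq_mul, RingHom.id_apply, Finset.mul_sum]
    exact Finset.sum_congr rfl fun j _ => by ring

lemma lmap_apply (w x : Fin n → ℝ) : lmap w x = ∑ j, w j * x j := rfl

lemma lmap_single (w : Fin n → ℝ) (j₀ : Fin n) (r : ℝ) :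
    lmap w (Pi.single j₀ r) = w j₀ * r := by
  rw [lmap_apply, Finset.sum_eq_single j₀ (fun j _ hj => by simp [Pi.single_apply, hj]) (by simp)]
  simp

lemma null_hyperplane (w : Fin n → ℝ) (hw : w ≠ 0) (t : ℝ) :
    volume {x : Fin n → ℝ | ∑ j, w j * x j = t} = 0 := by
  obtain ⟨j₀, hj₀⟩ := Function.ne_iff.1 hw
  simp only [Pi.zero_apply] at hj₀
  set x₀ : Fin n → ℝ := Pi.single j₀ (t / w j₀) with hx₀
  have hlx₀ : lmap w x₀ = t := by
    rw [hx₀, lmap_single]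
    field_simp
  have hker : LinearMap.ker (lmap w) ≠ ⊤ := by
    intro h
    apply hj₀
    have h1 : Pi.single j₀ (1:ℝ) ∈ LinearMap.ker (lmap w) := h ▸ Submodule.mem_top
    rw [LinearMap.mem_ker, lmap_single, mul_one] at h1
    exact h1
  have hset : {x : Fin n → ℝ | ∑ j, w j * x j = t}
      = x₀ +ᵥ (LinearMap.ker (lmap w) : Set (Fin n → ℝ)) := by
    ext x
    simp only [mem_setOf_eq, Set.mem_vadd_set, SetLike.mem_coe, LinearMap.mem_ker, vadd_eq_add]
    constructor
    · intro hx
      refine ⟨x - x₀, ?_, by abel⟩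
      rw [map_sub, hlx₀, lmap_apply, hx, sub_self]
    · rintro ⟨y, hy, rfl⟩
      show lmap w (x₀ + y) = t
      rw [map_add, hlx₀, hy, add_zero]
  rw [hset, measure_vadd]
  exact Measure.addHaar_submodule volume _ hker

lemma null_slice (i : Fin n) (c : ℝ) : volume {x : Fin n → ℝ | x i = c} = 0 := by
  have h := null_hyperplane (Pi.single i 1) (by
    intro h
    have := congrFun h i
    simp at this) c
  have hset : {x : Fin n → ℝ | x i = c} = {x : Fin n → ℝ | ∑ j, (Pi.single i 1 : Fin n → ℝ) j * x j = c} := by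
    ext x
    rw [mem_setOf_eq, mem_setOf_eq,
      Finset.sum_eq_single i (fun j _ hj => by simp [Pi.single_apply, hj]) (by simp)]
    simp
  rw [hset]
  exact h


def cutP (i : Fin n) (t : ℝ) (b : Box n) : Box n :=
  (Function.update b.1 i (max (b.1 i) t), b.2)

def cutM (i : Fin n) (t : ℝ) (b : Box n) : Box n :=
  (b.1, Function.update b.2 i (min (b.2 i) t))

lemma bset_cutP (i : Fin n) (t : ℝ) (b : Box n) :
    bset (cutP i t b) = bset b ∩ {x | t ≤ x i} := by
  ext x
  simp only [bset, cutP, mem_Icc, mem_inter_iff, mem_setOf_eq]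
  constructor
  · rintro ⟨h1, h2⟩
    have hi := h1 i
    rw [Function.update_self] at hi
    refine ⟨⟨fun j => ?_, h2⟩, le_trans (le_max_right _ _) hi⟩
    rcases eq_or_ne j i with rfl | hj
    · exact le_trans (le_max_left _ _) hi
    · have := h1 j
      rwa [Function.update_of_ne hj] at this
  · rintro ⟨⟨h1, h2⟩, h3⟩
    refine ⟨fun j => ?_, h2⟩
    rcases eq_or_ne j i with rfl | hj
    · rw [Function.update_self]
      exact max_le (h1 j) h3
    · rw [Function.update_of_ne hj]
      exact h1 j

lemma bset_cutM (i : Fin n) (t : ℝ) (b : Box n) :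
    bset (cutM i t b) = bset b ∩ {x | x i ≤ t} := by
  ext x
  simp only [bset, cutM, mem_Icc, mem_inter_iff, mem_setOf_eq]
  constructor
  · rintro ⟨h1, h2⟩
    have hi := h2 i
    rw [Function.update_self] at hi
    refine ⟨⟨h1, fun j => ?_⟩, le_trans hi (min_le_right _ _)⟩
    rcases eq_or_ne j i with rfl | hj
    · exact le_trans hi (min_le_left _ _)
    · have := h2 j
      rwa [Function.update_of_ne hj] at this
  · rintro ⟨⟨h1, h2⟩, h3⟩
    refine ⟨h1, fun j => ?_⟩
    rcases eq_or_ne j i with rfl | hj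
    · rw [Function.update_self]
      exact le_min (h2 j) h3
    · rw [Function.update_of_ne hj]
      exact h2 j

noncomputable def plusL (i : Fin n) (t : ℝ) (L : List (Box n)) : List (Box n) :=
  (L.map (cutP i t)).filter fun b => decide (nondeg b)

noncomputable def minusL (i : Fin n) (t : ℝ) (L : List (Box n)) : List (Box n) :=
  (L.map (cutM i t)).filter fun b => decide (nondeg b)

lemma U_map_cutP (i : Fin n) (t : ℝ) (L : List (Box n)) :
    U (L.map (cutP i t)) = U L ∩ {x | t ≤ x i} := by
  ext x
  simp only [U, mem_iUnion, exists_prop, mem_inter_iff, mem_setOf_eq]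
  constructor
  · rintro ⟨b, hb, hx⟩
    obtain ⟨c, hc, rfl⟩ := List.mem_map.1 hb
    rw [bset_cutP] at hx
    exact ⟨⟨c, hc, hx.1⟩, hx.2⟩
  · rintro ⟨⟨c, hc, hx⟩, hxi⟩
    exact ⟨cutP i t c, List.mem_map.2 ⟨c, hc, rfl⟩, by rw [bset_cutP]; exact ⟨hx, hxi⟩⟩

lemma U_map_cutM (i : Fin n) (t : ℝ) (L : List (Box n)) :
    U (L.map (cutM i t)) = U L ∩ {x | x i ≤ t} := by
  ext x
  simp only [U, mem_iUnion, exists_prop, mem_inter_iff, mem_setOf_eq]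
  constructor
  · rintro ⟨b, hb, hx⟩
    obtain ⟨c, hc, rfl⟩ := List.mem_map.1 hb
    rw [bset_cutM] at hx
    exact ⟨⟨c, hc, hx.1⟩, hx.2⟩
  · rintro ⟨⟨c, hc, hx⟩, hxi⟩
    exact ⟨cutM i t c, List.mem_map.2 ⟨c, hc, rfl⟩, by rw [bset_cutM]; exact ⟨hx, hxi⟩⟩

lemma vol_bset_deg (b : Box n) (hb : ¬ nondeg b) : volume (bset b) = 0 := by
  rw [vol_bset]
  obtain ⟨i, hi⟩ := not_forall.1 hb
  exact Finset.prod_eq_zero (Finset.mem_univ i) (by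
    rw [ENNReal.ofReal_eq_zero]
    linarith [not_lt.1 hi])

lemma vol_U_filter (L : List (Box n)) :
    volume (U (L.filter fun b => decide (nondeg b))) = volume (U L) := by
  apply le_antisymm
  · exact measure_mono (iUnion₂_mono' fun b hb =>
      ⟨b, List.mem_of_mem_filter hb, Subset.rfl⟩)
  · set N : Set (Fin n → ℝ) := ⋃ b ∈ {b | b ∈ L ∧ ¬ nondeg b}, bset b with hN
    have hNnull : volume N = 0 := by
      rw [hN]
      refine (measure_biUnion_null_iff ?_).2 fun b hb => vol_bset_deg b hb.2
      exact L.finite_toSet.countable.mono fun b hb => hb.1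
    have hsub : U L ⊆ U (L.filter fun b => decide (nondeg b)) ∪ N := by
      intro x hx
      simp only [U, mem_iUnion, exists_prop] at hx
      obtain ⟨b, hb, hxb⟩ := hx
      by_cases hnd : nondeg b
      · exact Or.inl (Set.mem_biUnion (List.mem_filter.2 ⟨hb, by simpa⟩) hxb)
      · exact Or.inr (Set.mem_biUnion ⟨hb, hnd⟩ hxb)
    calc volume (U L) ≤ volume (U (L.filter fun b => decide (nondeg b)) ∪ N) :=
          measure_mono hsub
      _ ≤ volume (U (L.filter fun b => decide (nondeg b))) + volume N := measure_union_le _ _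
      _ = volume (U (L.filter fun b => decide (nondeg b))) := by rw [hNnull, add_zero]

lemma vol_plusL (i : Fin n) (t : ℝ) (L : List (Box n)) :
    volume (U (plusL i t L)) = volume (U L ∩ {x | t ≤ x i}) := by
  rw [plusL, vol_U_filter, U_map_cutP]

lemma vol_minusL (i : Fin n) (t : ℝ) (L : List (Box n)) :
    volume (U (minusL i t L)) = volume (U L ∩ {x | x i ≤ t}) := by
  rw [minusL, vol_U_filter, U_map_cutM]

lemma plusL_subset (i : Fin n) (t : ℝ) (L : List (Box n)) :
    U (plusL i t L) ⊆ U L ∩ {x | t ≤ x i} := by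
  rw [← U_map_cutP i t L]
  exact iUnion₂_mono' fun b hb => ⟨b, List.mem_of_mem_filter hb, Subset.rfl⟩

lemma minusL_subset (i : Fin n) (t : ℝ) (L : List (Box n)) :
    U (minusL i t L) ⊆ U L ∩ {x | x i ≤ t} := by
  rw [← U_map_cutM i t L]
  exact iUnion₂_mono' fun b hb => ⟨b, List.mem_of_mem_filter hb, Subset.rfl⟩

lemma Sep.mono {b b' c c' : Box n} (h : Sep b c) (h1 : b.1 ≤ b'.1) (h2 : b'.2 ≤ b.2)
    (h3 : c.1 ≤ c'.1) (h4 : c'.2 ≤ c.2) : Sep b' c' := by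
  obtain ⟨i, h | h⟩ := h
  · exact ⟨i, Or.inl (le_trans (h2 i) (le_trans h (h3 i)))⟩
  · exact ⟨i, Or.inr (le_trans (h4 i) (le_trans h (h1 i)))⟩

lemma le_cutP (i : Fin n) (t : ℝ) (b : Box n) : b.1 ≤ (cutP i t b).1 := by
  intro j
  rcases eq_or_ne j i with rfl | hj
  · simp [cutP]
  · simp [cutP, Function.update_of_ne hj]

lemma cutM_le (i : Fin n) (t : ℝ) (b : Box n) : (cutM i t b).2 ≤ b.2 := by
  intro j
  rcases eq_or_ne j i with rfl | hj
  · simp [cutM]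
  · simp [cutM, Function.update_of_ne hj]

lemma good_plusL (i : Fin n) (t : ℝ) {L : List (Box n)} (hL : Good L) : Good (plusL i t L) := by
  constructor
  · intro b hb
    simpa using List.of_mem_filter hb
  · refine List.Pairwise.sublist List.filter_sublist ?_
    refine List.Pairwise.map _ (fun a b hab => ?_) hL.2
    exact hab.mono (le_cutP i t a) le_rfl (le_cutP i t b) le_rfl

lemma good_minusL (i : Fin n) (t : ℝ) {L : List (Box n)} (hL : Good L) : Good (minusL i t L) := by
  constructor
  · intro b hb
    simpa using List.of_mem_filter hb
  · refine List.Pairwise.sublist List.filter_sublist ?_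
    refine List.Pairwise.map _ (fun a b hab => ?_) hL.2
    exact hab.mono le_rfl (cutM_le i t a) le_rfl (cutM_le i t b)

lemma length_plusL_le (i : Fin n) (t : ℝ) (L : List (Box n)) :
    (plusL i t L).length ≤ L.length :=
  le_trans (List.length_filter_le _ _) (by rw [List.length_map])

lemma length_minusL_le (i : Fin n) (t : ℝ) (L : List (Box n)) :
    (minusL i t L).length ≤ L.length :=
  le_trans (List.length_filter_le _ _) (by rw [List.length_map])

lemma length_filter_lt {α : Type*} (l : List α) (p : α → Bool) {x : α} (hx : x ∈ l)
    (hpx : ¬ p x) : (l.filter p).length < l.length := by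
  have h := List.length_eq_length_filter_add (l := l) p
  have h2 : 0 < (l.filter fun a => ! p a).length := by
    rw [List.length_pos_iff]
    intro hemp
    have : x ∈ l.filter fun a => ! p a := List.mem_filter.2 ⟨hx, by simpa using hpx⟩
    simp [hemp] at this
  omega

lemma length_plusL_lt (i : Fin n) (t : ℝ) {L : List (Box n)} {b : Box n} (hb : b ∈ L)
    (h : b.2 i ≤ t) : (plusL i t L).length < L.length := by
  have : ¬ nondeg (cutP i t b) := by
    intro hnd
    have := hnd i
    simp only [cutP, Function.update_self] at this
    exact absurd (lt_of_le_of_lt (le_max_right _ _) this) (not_lt.2 h)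
  calc (plusL i t L).length < (L.map (cutP i t)).length :=
        length_filter_lt _ _ (List.mem_map_of_mem hb) (by simpa)
    _ = L.length := List.length_map _

lemma length_minusL_lt (i : Fin n) (t : ℝ) {L : List (Box n)} {b : Box n} (hb : b ∈ L)
    (h : t ≤ b.1 i) : (minusL i t L).length < L.length := by
  have : ¬ nondeg (cutM i t b) := by
    intro hnd
    have := hnd i
    simp only [cutM, Function.update_self] at this
    exact absurd (lt_of_lt_of_le this (min_le_right _ _)) (not_lt.2 h)
  calc (minusL i t L).length < (L.map (cutM i t)).length :=
        length_filter_lt _ _ (List.mem_map_of_mem hb) (by simpa)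
    _ = L.length := List.length_map _


lemma pow_two_le (x y : ℝ≥0∞) (h : x ^ 2 ≤ y ^ 2) : x ≤ y := by
  by_contra hlt
  exact absurd h (not_le.2 (ENNReal.pow_lt_pow_left two_ne_zero (not_le.1 hlt)))

lemma base_case (b c : Box n) (hb : nondeg b) (hc : nondeg c) :
    (4 : ℝ≥0∞) ^ n * (volume (bset b) * volume (bset c))
      ≤ (volume (bset b + bset c)) ^ 2 := by
  rw [bset_add (nondeg_le hb) (nondeg_le hc), vol_bset, vol_bset, vol_bset]
  calc (4 : ℝ≥0∞) ^ n * ((∏ i, ENNReal.ofReal (b.2 i - b.1 i)) *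
          ∏ i, ENNReal.ofReal (c.2 i - c.1 i))
      = ∏ i : Fin n, (4 * (ENNReal.ofReal (b.2 i - b.1 i) * ENNReal.ofReal (c.2 i - c.1 i))) := by
        rw [Finset.prod_mul_distrib, Finset.prod_mul_distrib, Finset.prod_const]
        simp [Finset.card_univ, mul_assoc]
    _ ≤ ∏ i : Fin n, (ENNReal.ofReal ((bsum b c).2 i - (bsum b c).1 i)) ^ 2 := by
        refine Finset.prod_le_prod' fun i _ => ?_
        have hb' := hb i
        have hc' := hc i
        have h4 : (4 : ℝ≥0∞) = ENNReal.ofReal 4 := by norm_num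
        rw [h4, ← ENNReal.ofReal_mul (by linarith : (0:ℝ) ≤ b.2 i - b.1 i),
          ← ENNReal.ofReal_mul (by norm_num : (0:ℝ) ≤ 4),
          ← ENNReal.ofReal_pow (by simp only [bsum, Pi.add_apply]; linarith)]
        apply ENNReal.ofReal_le_ofReal
        simp only [bsum, Pi.add_apply]
        nlinarith [sq_nonneg ((b.2 i - b.1 i) - (c.2 i - c.1 i))]
    _ = (∏ i, ENNReal.ofReal ((bsum b c).2 i - (bsum b c).1 i)) ^ 2 := by
        rw [← Finset.prod_pow]

lemma vol_add_parts {X1 X2 Y : Set (Fin n → ℝ)} (hX2 : MeasurableSet X2)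
    (i : Fin n) (r : ℝ) (h1 : X1 ⊆ {x | r ≤ x i}) (h2 : X2 ⊆ {x | x i ≤ r})
    (hY : X1 ∪ X2 ⊆ Y) : volume X1 + volume X2 ≤ volume Y := by
  have hnull : volume (X1 ∩ X2) = 0 := by
    refine measure_mono_null (fun x hx => ?_) (null_slice i r)
    exact le_antisymm (h2 hx.2) (h1 hx.1)
  calc volume X1 + volume X2 = volume (X1 ∪ X2) + volume (X1 ∩ X2) :=
        (measure_union_add_inter X1 hX2).symm
    _ = volume (X1 ∪ X2) := by rw [hnull, add_zero]
    _ ≤ volume Y := measure_mono hY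

lemma bset_bounded (b : Box n) : Bornology.IsBounded (bset b) := by
  refine (Metric.isBounded_iff_subset_closedBall b.1).2 ⟨‖b.2 - b.1‖, fun x hx => ?_⟩
  rw [Metric.mem_closedBall, dist_eq_norm]
  refine (pi_norm_le_iff_of_nonneg (norm_nonneg _)).2 fun j => ?_
  rw [Real.norm_eq_abs, Pi.sub_apply, abs_of_nonneg (by linarith [hx.1 j])]
  calc x j - b.1 j ≤ b.2 j - b.1 j := by linarith [hx.2 j]
    _ ≤ |b.2 j - b.1 j| := le_abs_self _
    _ = ‖(b.2 - b.1) j‖ := by simp [Real.norm_eq_abs]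
    _ ≤ ‖b.2 - b.1‖ := norm_le_pi_norm _ j

lemma U_bounded (L : List (Box n)) : Bornology.IsBounded (U L) := by
  induction L with
  | nil => simp
  | cons b L ih => rw [U_cons]; exact (bset_bounded b).union ih

lemma exists_coord_bound (L : List (Box n)) :
    ∃ r : ℝ, 0 ≤ r ∧ ∀ x ∈ U L, ∀ j, |x j| ≤ r := by
  obtain ⟨r, hr⟩ := (Metric.isBounded_iff_subset_closedBall 0).1 (U_bounded L)
  refine ⟨max r 0, le_max_right _ _, fun x hx j => ?_⟩
  have := hr hx
  rw [Metric.mem_closedBall, dist_zero_right] at this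
  calc |x j| = ‖x j‖ := rfl
    _ ≤ ‖x‖ := norm_le_pi_norm x j
    _ ≤ max r 0 := le_trans this (le_max_left _ _)

lemma exists_cut (M : List (Box n)) (i : Fin n) {v : ℝ} (hv0 : 0 ≤ v)
    (hvb : v ≤ (volume (U M)).toReal) :
    ∃ s : ℝ, (volume (U M ∩ {x | s ≤ x i})).toReal = v := by
  obtain ⟨r, hr0, hr⟩ := exists_coord_bound M
  set B := U M with hB
  set C : ℝ≥0∞ := ∏ j ∈ Finset.univ.erase i, ENNReal.ofReal (2 * r) with hC
  have hCfin : C ≠ ⊤ := by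
    rw [hC]
    exact (prod_lt_top fun j _ => ofReal_lt_top).ne
  set F : ℝ → ℝ := fun s => (volume (B ∩ {x | s ≤ x i})).toReal with hF
  have hfin : ∀ s, volume (B ∩ {x | s ≤ x i}) ≠ ⊤ :=
    fun s => ne_top_of_le_ne_top (vol_U_ne_top M) (measure_mono inter_subset_left)
  have hmono : ∀ {s s' : ℝ}, s ≤ s' → F s' ≤ F s := by
    intro s s' hss
    exact ENNReal.toReal_mono (hfin s)
      (measure_mono (inter_subset_inter_right _ fun x hx => le_trans hss hx))
  have hslab : ∀ s s' : ℝ, s ≤ s' → F s ≤ F s' + (s' - s) * C.toReal := by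
    intro s s' hss
    have hsub : B ∩ {x | s ≤ x i} ⊆ (B ∩ {x | s' ≤ x i}) ∪
        (Icc (Function.update (fun _ => -r) i s) (Function.update (fun _ => r) i s')) := by
      rintro x ⟨hxB, hxi⟩
      rcases le_total s' (x i) with h | h
      · exact Or.inl ⟨hxB, h⟩
      · refine Or.inr ⟨fun j => ?_, fun j => ?_⟩
        · rcases eq_or_ne j i with rfl | hj
          · rwa [Function.update_self]
          · rw [Function.update_of_ne hj]
            linarith [abs_le.1 (hr x hxB j) |>.1]
        · rcases eq_or_ne j i with rfl | hj
          · rwa [Function.update_self]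
          · rw [Function.update_of_ne hj]
            linarith [abs_le.1 (hr x hxB j) |>.2]
    have hboxvol : volume (Icc (Function.update (fun _ => -r) i s)
        (Function.update (fun _ => r) i s')) = ENNReal.ofReal (s' - s) * C := by
      rw [Real.volume_Icc_pi]
      rw [← Finset.mul_prod_erase Finset.univ _ (Finset.mem_univ i)]
      congr 1
      · rw [Function.update_self, Function.update_self]
      · refine Finset.prod_congr rfl fun j hj => ?_
        rw [Function.update_of_ne (Finset.ne_of_mem_erase hj),
          Function.update_of_ne (Finset.ne_of_mem_erase hj)]
        norm_num [two_mul]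
    have h2 := le_trans (measure_mono (μ := (volume : Measure (Fin n → ℝ))) hsub)
      (measure_union_le _ _)
    rw [hboxvol] at h2
    calc F s ≤ ((volume (B ∩ {x | s' ≤ x i})) + ENNReal.ofReal (s' - s) * C).toReal := by
          refine ENNReal.toReal_mono ?_ h2
          exact ENNReal.add_ne_top.2 ⟨hfin s', ENNReal.mul_ne_top ofReal_ne_top hCfin⟩
      _ = F s' + (ENNReal.ofReal (s' - s) * C).toReal := by
          rw [ENNReal.toReal_add (hfin s') (ENNReal.mul_ne_top ofReal_ne_top hCfin)]
      _ = F s' + (s' - s) * C.toReal := by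
          rw [ENNReal.toReal_mul, ENNReal.toReal_ofReal (by linarith)]
  have hcont : Continuous F := by
    have : LipschitzWith (C.toReal.toNNReal) F := by
      refine LipschitzWith.of_dist_le_mul fun s s' => ?_
      rcases le_total s s' with h | h
      · rw [Real.dist_eq, Real.dist_eq, abs_of_nonneg (by linarith [hmono h]),
          abs_of_nonpos (by linarith : s - s' ≤ 0), Real.coe_toNNReal _ ENNReal.toReal_nonneg]
        have h1 := hslab s s' h
        nlinarith
      · rw [Real.dist_eq, Real.dist_eq, abs_of_nonpos (by linarith [hmono h] : F s - F s' ≤ 0),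
          abs_of_nonneg (by linarith : 0 ≤ s - s'), Real.coe_toNNReal _ ENNReal.toReal_nonneg]
        have h1 := hslab s' s h
        nlinarith
    exact this.continuous
  have hlo : F (-(r+1)) = (volume (U M)).toReal := by
    show (volume (B ∩ {x | -(r+1) ≤ x i})).toReal = (volume (U M)).toReal
    have heq : B ∩ {x | -(r+1) ≤ x i} = B := inter_eq_self_of_subset_left fun x hx => by
      show -(r+1) ≤ x i
      linarith [abs_le.1 (hr x hx i) |>.1]
    rw [heq]
  have hhi : F (r+1) = 0 := by
    show (volume (B ∩ {x | r+1 ≤ x i})).toReal = 0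
    have heq : B ∩ {x | r+1 ≤ x i} = ∅ := eq_empty_of_forall_notMem fun x hx => by
      have h1 : r + 1 ≤ x i := hx.2
      linarith [abs_le.1 (hr x hx.1 i) |>.2]
    rw [heq, measure_empty, ENNReal.toReal_zero]
  have hIcc : v ∈ Icc (F (r+1)) (F (-(r+1))) := by
    rw [hhi, hlo]
    exact ⟨hv0, hvb⟩
  have := intermediate_value_Icc' (by linarith : -(r+1) ≤ r+1) hcont.continuousOn hIcc
  obtain ⟨s, _, hs⟩ := this
  exact ⟨s, hs⟩


lemma measurableSet_halfP (i : Fin n) (t : ℝ) : MeasurableSet {x : Fin n → ℝ | t ≤ x i} :=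
  measurableSet_le measurable_const (measurable_pi_apply i)

lemma measurableSet_halfM (i : Fin n) (t : ℝ) : MeasurableSet {x : Fin n → ℝ | x i ≤ t} :=
  measurableSet_le (measurable_pi_apply i) measurable_const

lemma vol_split (L : List (Box n)) (i : Fin n) (t : ℝ) :
    volume (U L ∩ {x | t ≤ x i}) + volume (U L ∩ {x | x i ≤ t}) = volume (U L) := by
  have hXY : (U L ∩ {x | t ≤ x i}) ∪ (U L ∩ {x | x i ≤ t}) = U L := by
    rw [← inter_union_distrib_left]
    refine inter_eq_self_of_subset_left ?_ |>.symm ▸ ?_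
    · exact fun x _ => le_total t (x i)
    · rfl
  have hnull : volume ((U L ∩ {x | t ≤ x i}) ∩ (U L ∩ {x | x i ≤ t})) = 0 :=
    measure_mono_null (fun x hx => le_antisymm hx.2.2 hx.1.2) (null_slice i t)
  have h := measure_union_add_inter (μ := (volume : Measure (Fin n → ℝ)))
    (U L ∩ {x | t ≤ x i}) ((measurable_U L).inter (measurableSet_halfM i t))
  rw [hXY, hnull, add_zero] at h
  exact h.symm

lemma measurable_sum {L M : List (Box n)} (hL : Good L) (hM : Good M) :
    MeasurableSet (U L + U M) := by
  rw [U_addL hL.1 hM.1]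
  exact measurable_U _

lemma vol_inter_ne_top (L : List (Box n)) (S : Set (Fin n → ℝ)) :
    volume (U L ∩ S) ≠ ⊤ :=
  ne_top_of_le_ne_top (vol_U_ne_top L) (measure_mono inter_subset_left)

lemma key {L M : List (Box n)}
    (ih : ∀ L' M' : List (Box n), L'.length + M'.length < L.length + M.length →
      Good L' → Good M' → L' ≠ [] → M' ≠ [] →
      (4:ℝ≥0∞)^n * (volume (U L') * volume (U M')) ≤ (volume (U L' + U M'))^2)
    (hL : Good L) (hM : Good M) (hLne : L ≠ []) (hMne : M ≠ []) (h2 : 2 ≤ L.length) :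
    (4:ℝ≥0∞)^n * (volume (U L) * volume (U M)) ≤ (volume (U L + U M))^2 := by
  classical
  -- find a separating cut
  obtain ⟨i, t, bp, hbpL, hbpt, bm, hbmL, hbmt⟩ :
      ∃ i t bp, bp ∈ L ∧ bp.2 i ≤ t ∧ ∃ bm, bm ∈ L ∧ t ≤ bm.1 i := by
    obtain ⟨b0, b1, rest, rfl⟩ : ∃ b0 b1 rest, L = b0 :: b1 :: rest := by
      rcases L with _ | ⟨b0, _ | ⟨b1, rest⟩⟩
      · simp at h2
      · simp at h2
      · exact ⟨b0, b1, rest, rfl⟩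
    have hsep : Sep b0 b1 := (List.pairwise_cons.1 hL.2).1 b1 (by simp)
    obtain ⟨i, hs | hs⟩ := hsep
    · exact ⟨i, b0.2 i, b0, by simp, le_rfl, b1, by simp, hs⟩
    · exact ⟨i, b1.2 i, b1, by simp, le_rfl, b0, by simp, hs⟩
  set a := volume (U L) with ha
  set bb := volume (U M) with hbb
  have hane : a ≠ ⊤ := vol_U_ne_top L
  have hbne : bb ≠ ⊤ := vol_U_ne_top M
  have hapos : 0 < a := U_pos L hL hLne
  have hbpos : 0 < bb := U_pos M hM hMne
  set aP := volume (U L ∩ {x | t ≤ x i}) with haP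
  set aM := volume (U L ∩ {x | x i ≤ t}) with haM
  have hsplitA : aP + aM = a := vol_split L i t
  have haPne : aP ≠ ⊤ := vol_inter_ne_top L _
  have haMne : aM ≠ ⊤ := vol_inter_ne_top L _
  -- choose s for M by IVT
  have har : 0 < a.toReal := ENNReal.toReal_pos hapos.ne' hane
  have haPle : aP.toReal ≤ a.toReal :=
    ENNReal.toReal_mono hane (measure_mono inter_subset_left)
  obtain ⟨s, hs⟩ := exists_cut M i (v := aP.toReal * bb.toReal / a.toReal)
    (by positivity)
    (by
      rw [div_le_iff₀ har]
      calc aP.toReal * bb.toReal ≤ a.toReal * bb.toReal := by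
            have := ENNReal.toReal_nonneg (a := bb)
            nlinarith
        _ = bb.toReal * a.toReal := by ring)
  set bP := volume (U M ∩ {x | s ≤ x i}) with hbP
  set bM := volume (U M ∩ {x | x i ≤ s}) with hbM
  have hsplitB : bP + bM = bb := vol_split M i s
  have hbPne : bP ≠ ⊤ := vol_inter_ne_top M _
  have hbMne : bM ≠ ⊤ := vol_inter_ne_top M _
  -- cross identity
  have hcross : aM * bP = aP * bM := by
    rw [← ENNReal.toReal_eq_toReal_iff' (ENNReal.mul_ne_top haMne hbPne)
      (ENNReal.mul_ne_top haPne hbMne), ENNReal.toReal_mul, ENNReal.toReal_mul]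
    have haMr : aM.toReal = a.toReal - aP.toReal := by
      rw [← hsplitA, ENNReal.toReal_add haPne haMne]
      ring
    have hbMr : bM.toReal = bb.toReal - bP.toReal := by
      rw [← hsplitB, ENNReal.toReal_add hbPne hbMne]
      ring
    rw [haMr, hbMr, hs]
    field_simp
  -- the four lists
  set LP := plusL i t L with hLP
  set LM := minusL i t L with hLM
  set MP := plusL i s M with hMP
  set MM := minusL i s M with hMM
  have hvLP : volume (U LP) = aP := vol_plusL i t L
  have hvLM : volume (U LM) = aM := vol_minusL i t L
  have hvMP : volume (U MP) = bP := vol_plusL i s M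
  have hvMM : volume (U MM) = bM := vol_minusL i s M
  have hgLP : Good LP := good_plusL i t hL
  have hgLM : Good LM := good_minusL i t hL
  have hgMP : Good MP := good_plusL i s hM
  have hgMM : Good MM := good_minusL i s hM
  set u := volume (U LP + U MP) with hu'
  set v := volume (U LM + U MM) with hv'
  -- superadditivity
  have huv : u + v ≤ volume (U L + U M) := by
    refine vol_add_parts (measurable_sum hgLM hgMM) i (t + s) ?_ ?_ ?_
    · rintro z ⟨x, hx, y, hy, rfl⟩
      have h1 : t ≤ x i := (plusL_subset i t L hx).2
      have h2 : s ≤ y i := (plusL_subset i s M hy).2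
      show t + s ≤ x i + y i
      exact add_le_add h1 h2
    · rintro z ⟨x, hx, y, hy, rfl⟩
      have h1 : x i ≤ t := (minusL_subset i t L hx).2
      have h2 : y i ≤ s := (minusL_subset i s M hy).2
      show x i + y i ≤ t + s
      exact add_le_add h1 h2
    · refine union_subset (Set.add_subset_add ?_ ?_) (Set.add_subset_add ?_ ?_)
      · exact fun x hx => (plusL_subset i t L hx).1
      · exact fun y hy => (plusL_subset i s M hy).1
      · exact fun x hx => (minusL_subset i t L hx).1
      · exact fun y hy => (minusL_subset i s M hy).1
  -- induction on the two halves
  have hu : (4:ℝ≥0∞)^n * (aP * bP) ≤ u ^ 2 := by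
    by_cases hLPe : LP = []
    · have : aP = 0 := by rw [← hvLP, hLPe]; simp
      rw [this]
      simp
    · by_cases hMPe : MP = []
      · have : bP = 0 := by rw [← hvMP, hMPe]; simp
        rw [this]
        simp
      · have hlen : LP.length + MP.length < L.length + M.length :=
          Nat.add_lt_add_of_lt_of_le (length_plusL_lt i t hbpL hbpt) (length_plusL_le i s M)
        have := ih LP MP hlen hgLP hgMP hLPe hMPe
        rwa [hvLP, hvMP] at this
  have hv : (4:ℝ≥0∞)^n * (aM * bM) ≤ v ^ 2 := by
    by_cases hLMe : LM = []
    · have : aM = 0 := by rw [← hvLM, hLMe]; simp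
      rw [this]
      simp
    · by_cases hMMe : MM = []
      · have : bM = 0 := by rw [← hvMM, hMMe]; simp
        rw [this]
        simp
      · have hlen : LM.length + MM.length < L.length + M.length :=
          Nat.add_lt_add_of_lt_of_le (length_minusL_lt i t hbmL hbmt) (length_minusL_le i s M)
        have := ih LM MM hlen hgLM hgMM hLMe hMMe
        rwa [hvLM, hvMM] at this
  -- geometric mean of the two bounds
  have huvprod : (4:ℝ≥0∞)^n * (aP * bM) ≤ u * v := by
    refine pow_two_le _ _ ?_
    have e2 : aP * bP * (aM * bM) = (aP * bM) * (aM * bP) := by ring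
    rw [hcross] at e2
    calc ((4:ℝ≥0∞)^n * (aP * bM)) ^ 2 = (4^n * (aP*bP)) * (4^n * (aM*bM)) := by
          rw [mul_pow]
          rw [show ((4:ℝ≥0∞)^n * (aP*bP)) * (4^n * (aM*bM))
              = (4^n)^2 * (aP*bP*(aM*bM)) by ring, e2]
          ring
      _ ≤ u^2 * v^2 := mul_le_mul' hu hv
      _ = (u * v)^2 := by ring
  calc (4:ℝ≥0∞)^n * (volume (U L) * volume (U M))
      = 4^n * ((aP + aM) * (bP + bM)) := by rw [hsplitA, hsplitB]
    _ = 4^n * (aP*bP) + 2 * (4^n * (aP*bM)) + 4^n * (aM*bM) := by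
        rw [show (aP + aM) * (bP + bM) = aP*bP + (aP*bM + aM*bP) + aM*bM by ring, hcross]
        ring
    _ ≤ u^2 + 2*(u*v) + v^2 :=
        add_le_add (add_le_add hu (mul_le_mul_right huvprod 2)) hv
    _ = (u + v)^2 := by ring
    _ ≤ (volume (U L + U M))^2 := pow_le_pow_left' huv 2

theorem boxBM (L M : List (Box n)) (hL : Good L) (hM : Good M) (hLne : L ≠ []) (hMne : M ≠ []) :
    (4:ℝ≥0∞)^n * (volume (U L) * volume (U M)) ≤ (volume (U L + U M))^2 := by
  suffices H : ∀ N (L M : List (Box n)), L.length + M.length ≤ N → Good L → Good M →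
      L ≠ [] → M ≠ [] →
      (4:ℝ≥0∞)^n * (volume (U L) * volume (U M)) ≤ (volume (U L + U M))^2 by
    exact H (L.length + M.length) L M le_rfl hL hM hLne hMne
  intro N
  induction N with
  | zero =>
      intro L M hlen _ _ hLne _
      exact absurd hlen (by
        have := List.length_pos_iff.2 hLne
        omega)
  | succ N ihN =>
      intro L M hlen hL hM hLne hMne
      by_cases hL2 : 2 ≤ L.length
      · exact key (fun L' M' h' hL' hM' hL'e hM'e =>
          ihN L' M' (by omega) hL' hM' hL'e hM'e) hL hM hLne hMne hL2
      · by_cases hM2 : 2 ≤ M.length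
        · have := key (L := M) (M := L) (fun L' M' h' hL' hM' hL'e hM'e =>
            ihN L' M' (by omega) hL' hM' hL'e hM'e) hM hL hMne hLne hM2
          rw [add_comm (U M) (U L), mul_comm (volume (U M)) (volume (U L))] at this
          exact this
        · have hL1 : L.length = 1 := by
            have := List.length_pos_iff.2 hLne
            omega
          have hM1 : M.length = 1 := by
            have := List.length_pos_iff.2 hMne
            omega
          obtain ⟨b, rfl⟩ := List.length_eq_one_iff.1 hL1
          obtain ⟨c, rfl⟩ := List.length_eq_one_iff.1 hM1
          have hU1 : U [b] = bset b := by rw [U_cons, U_nil, union_empty]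
          have hU2 : U [c] = bset c := by rw [U_cons, U_nil, union_empty]
          rw [hU1, hU2]
          exact base_case b c (hL.1 b (by simp)) (hM.1 c (by simp))


def negB (b : Box n) : Box n := (-b.2, -b.1)

lemma bset_negB (b : Box n) : bset (negB b) = -(bset b) := by
  ext x
  simp only [bset, negB, mem_Icc, Set.mem_neg]
  constructor
  · rintro ⟨h1, h2⟩
    exact ⟨fun i => by have := h2 i; simpa using (neg_le_neg this), fun i => by
      have := h1 i; simp only [Pi.neg_apply] at this ⊢; linarith⟩
  · rintro ⟨h1, h2⟩
    exact ⟨fun i => by have := h2 i; simp only [Pi.neg_apply] at this ⊢; linarith,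
      fun i => by have := h1 i; simp only [Pi.neg_apply] at this ⊢; linarith⟩

lemma U_negB (L : List (Box n)) : U (L.map negB) = -(U L) := by
  ext x
  simp only [U, mem_iUnion, exists_prop, Set.mem_neg]
  constructor
  · rintro ⟨b, hb, hx⟩
    obtain ⟨c, hc, rfl⟩ := List.mem_map.1 hb
    rw [bset_negB] at hx
    exact ⟨c, hc, hx⟩
  · rintro ⟨b, hb, hx⟩
    exact ⟨negB b, List.mem_map.2 ⟨b, hb, rfl⟩, by rw [bset_negB]; exact hx⟩

lemma good_negB {L : List (Box n)} (hL : Good L) : Good (L.map negB) := by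
  constructor
  · intro b hb
    obtain ⟨c, hc, rfl⟩ := List.mem_map.1 hb
    intro i
    simp only [negB, Pi.neg_apply]
    have := hL.1 c hc i
    linarith
  · refine List.Pairwise.map _ (fun a b hab => ?_) hL.2
    obtain ⟨i, h | h⟩ := hab
    · exact ⟨i, Or.inr (by simp only [negB, Pi.neg_apply]; linarith)⟩
    · exact ⟨i, Or.inl (by simp only [negB, Pi.neg_apply]; linarith)⟩

lemma coord_bound {S : Set (Fin n → ℝ)} (h : Bornology.IsBounded S) :
    ∃ r : ℝ, 0 ≤ r ∧ ∀ x ∈ S, ∀ j, |x j| ≤ r := by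
  obtain ⟨r, hr⟩ := (Metric.isBounded_iff_subset_closedBall 0).1 h
  refine ⟨max r 0, le_max_right _ _, fun x hx j => ?_⟩
  have := hr hx
  rw [Metric.mem_closedBall, dist_zero_right] at this
  calc |x j| = ‖x j‖ := rfl
    _ ≤ ‖x‖ := norm_le_pi_norm x j
    _ ≤ max r 0 := le_trans this (le_max_left _ _)

lemma neg_set_vol (S : Set (Fin n → ℝ)) : volume (-S) = volume S := by
  have : -S = (-1 : ℝ) • S := by
    ext x
    simp only [Set.mem_neg, Set.mem_smul_set]
    constructor
    · intro hx
      exact ⟨-x, hx, by simp⟩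
    · rintro ⟨y, hy, rfl⟩
      simpa using hy
  rw [this, Measure.addHaar_smul]
  simp

lemma smul_set_vol (c : ℝ) (S : Set (Fin n → ℝ)) :
    volume (c • S) = ENNReal.ofReal (|c| ^ n) * volume S := by
  rw [Measure.addHaar_smul, Module.finrank_fin_fun, abs_pow]

lemma diff_body_step {K : Set (Fin n → ℝ)} (hKcomp : IsCompact K) (hKconv : Convex ℝ K)
    (hKint : (interior K).Nonempty) {δ : ℝ} (hδ : δ ∈ Ioo (0:ℝ) 1) :
    (2:ℝ≥0∞)^n * (ENNReal.ofReal ((1-δ)^n) * volume K) ≤ volume (K - K) := by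
  classical
  obtain ⟨xbar, hxbar⟩ := hKint
  set f : (Fin n → ℝ) → (Fin n → ℝ) := fun y => δ • xbar + (1 - δ) • y with hf
  set Kd := f '' K with hKd
  have hKne : K.Nonempty := ⟨xbar, interior_subset hxbar⟩
  have hKdsub : Kd ⊆ interior K := by
    rintro _ ⟨y, hy, rfl⟩
    exact hKconv.combo_interior_closure_mem_interior hxbar (subset_closure hy)
      hδ.1 (by linarith [hδ.2]) (by ring)
  have hKdcomp : IsCompact Kd := hKcomp.image (by continuity)
  have hKdvol : volume Kd = ENNReal.ofReal ((1-δ)^n) * volume K := by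
    have heq : Kd = (δ • xbar) +ᵥ ((1 - δ) • K) := by
      ext z
      simp only [hKd, hf, Set.mem_image, Set.mem_vadd_set, Set.mem_smul_set, vadd_eq_add]
      constructor
      · rintro ⟨y, hy, rfl⟩
        exact ⟨(1 - δ) • y, ⟨y, hy, rfl⟩, rfl⟩
      · rintro ⟨_, ⟨y, hy, rfl⟩, rfl⟩
        exact ⟨y, hy, rfl⟩
    rw [heq, measure_vadd, smul_set_vol, abs_of_nonneg (by linarith [hδ.2] : (0:ℝ) ≤ 1 - δ)]
  obtain ⟨rr, hrr0, hrr⟩ := hKdcomp.exists_thickening_subset_open isOpen_interior hKdsub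
  set ε := rr / 2 with hε
  have hε0 : 0 < ε := by positivity
  obtain ⟨ρ, hρ0, hρ⟩ := coord_bound hKcomp.isBounded
  -- the cubes
  set cubeB : (Fin n → ℤ) → Box n :=
    fun z => (fun i => ε * z i, fun i => ε * z i + ε) with hcubeB
  have hcube_nondeg : ∀ z, nondeg (cubeB z) := fun z i => by
    simp only [hcubeB]
    linarith
  set Z : Finset (Fin n → ℤ) :=
    Finset.Icc (fun _ => ⌊-ρ/ε⌋) (fun _ => ⌊ρ/ε⌋) with hZ
  set P : (Fin n → ℤ) → Prop := fun z => bset (cubeB z) ⊆ K with hP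
  set L : List (Box n) := ((Z.filter P).toList).map cubeB with hL
  have hLK : U L ⊆ K := by
    intro x hx
    simp only [U, mem_iUnion, exists_prop] at hx
    obtain ⟨b, hb, hxb⟩ := hx
    obtain ⟨z, hz, rfl⟩ := List.mem_map.1 hb
    have := (Finset.mem_filter.1 (Finset.mem_toList.1 hz)).2
    exact this hxb
  have hGood : Good L := by
    constructor
    · intro b hb
      obtain ⟨z, _, rfl⟩ := List.mem_map.1 hb
      exact hcube_nondeg z
    · have hSep : ∀ z z' : Fin n → ℤ, z ≠ z' → Sep (cubeB z) (cubeB z') := by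
        intro z z' hzz
        obtain ⟨i, hi⟩ := Function.ne_iff.1 hzz
        rcases lt_or_gt_of_ne hi with h | h
        · refine ⟨i, Or.inl ?_⟩
          simp only [hcubeB]
          have : (z i : ℝ) + 1 ≤ (z' i : ℝ) := by exact_mod_cast h
          nlinarith
        · refine ⟨i, Or.inr ?_⟩
          simp only [hcubeB]
          have : (z' i : ℝ) + 1 ≤ (z i : ℝ) := by exact_mod_cast h
          nlinarith
      exact List.Pairwise.map _ (fun z z' hzz => hSep z z' hzz) (Finset.nodup_toList _)
  have hcover : Kd ⊆ U L := by
    intro x hx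
    set z : Fin n → ℤ := fun i => ⌊x i / ε⌋ with hz
    have hxz : x ∈ bset (cubeB z) := by
      constructor <;> intro i
      · show ε * ⌊x i / ε⌋ ≤ x i
        calc ε * (⌊x i / ε⌋ : ℝ) ≤ ε * (x i / ε) :=
              mul_le_mul_of_nonneg_left (Int.floor_le _) hε0.le
          _ = x i := by field_simp
      · show x i ≤ ε * ⌊x i / ε⌋ + ε
        have h1 : x i / ε < ⌊x i / ε⌋ + 1 := Int.lt_floor_add_one _
        have h2 : x i = ε * (x i / ε) := by field_simp
        nlinarith
    have hcubeK : bset (cubeB z) ⊆ K := by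
      intro y hy
      have hyK : y ∈ Metric.thickening rr Kd := by
        rw [Metric.mem_thickening_iff]
        refine ⟨x, hx, ?_⟩
        have : dist y x ≤ ε := by
          rw [dist_pi_le_iff hε0.le]
          intro j
          rw [Real.dist_eq, abs_le]
          have ha := hy.1 j
          have hb := hy.2 j
          have hc := hxz.1 j
          have hd := hxz.2 j
          simp only [hcubeB] at ha hb hc hd
          constructor <;> linarith
        linarith
      exact interior_subset (hrr hyK)
    have hxK : x ∈ K := interior_subset (hKdsub hx)
    have hzZ : z ∈ Z := by
      rw [hZ, Finset.mem_Icc]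
      constructor <;> intro i
      · show ⌊-ρ/ε⌋ ≤ ⌊x i / ε⌋
        apply Int.floor_le_floor
        have h := (abs_le.1 (hρ x hxK i)).1
        gcongr
      · show ⌊x i / ε⌋ ≤ ⌊ρ/ε⌋
        apply Int.floor_le_floor
        have h := (abs_le.1 (hρ x hxK i)).2
        gcongr
    refine Set.mem_biUnion (List.mem_map.2 ⟨z, Finset.mem_toList.2 (Finset.mem_filter.2 ⟨hzZ, hcubeK⟩), rfl⟩) hxz
  have hLne : L ≠ [] := by
    intro h
    have hKdne : Kd.Nonempty := hKne.image f
    obtain ⟨x, hx⟩ := hKdne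
    have := hcover hx
    rw [h] at this
    simp at this
  -- apply boxBM
  set L' := L.map negB with hL'
  have h4 := boxBM L L' hGood (good_negB hGood) hLne (by
    intro h
    exact hLne (List.map_eq_nil_iff.1 h))
  rw [U_negB] at h4
  have hsum : U L + -(U L) ⊆ K - K := by
    rw [sub_eq_add_neg]
    exact Set.add_subset_add hLK (Set.neg_subset_neg.2 hLK)
  have h5 : (4:ℝ≥0∞)^n * (volume (U L) * volume (U L)) ≤ (volume (K - K))^2 := by
    rw [neg_set_vol] at h4
    exact h4.trans (pow_le_pow_left' (measure_mono hsum) 2)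
  have hq : ENNReal.ofReal ((1-δ)^n) * volume K ≤ volume (U L) := by
    rw [← hKdvol]
    exact measure_mono hcover
  refine pow_two_le _ _ ?_
  calc ((2:ℝ≥0∞)^n * (ENNReal.ofReal ((1-δ)^n) * volume K))^2
      = (4:ℝ≥0∞)^n * ((ENNReal.ofReal ((1-δ)^n) * volume K) *
          (ENNReal.ofReal ((1-δ)^n) * volume K)) := by
        rw [mul_pow, ← pow_mul, mul_comm n 2, pow_mul]
        norm_num
        ring
    _ ≤ (4:ℝ≥0∞)^n * (volume (U L) * volume (U L)) :=
        mul_le_mul_right (mul_le_mul' hq hq) _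
    _ ≤ (volume (K - K))^2 := h5

lemma diff_body {K : Set (Fin n → ℝ)} (hKcomp : IsCompact K) (hKconv : Convex ℝ K)
    (hKint : (interior K).Nonempty) :
    (2:ℝ≥0∞)^n * volume K ≤ volume (K - K) := by
  have hvolK : volume K ≠ ⊤ := hKcomp.measure_lt_top.ne
  have htends : Filter.Tendsto
      (fun δ : ℝ => (2:ℝ≥0∞)^n * (ENNReal.ofReal ((1-δ)^n) * volume K))
      (nhdsWithin 0 (Ioi 0)) (nhds ((2:ℝ≥0∞)^n * (ENNReal.ofReal ((1-0:ℝ)^n) * volume K))) := by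
    refine Filter.Tendsto.mono_left ?_ nhdsWithin_le_nhds
    refine ENNReal.Tendsto.const_mul (ENNReal.Tendsto.mul_const ?_ (Or.inr hvolK))
      (Or.inr (by simp))
    exact (ENNReal.continuous_ofReal.tendsto _).comp
      (Continuous.tendsto (by continuity) 0)
  have heven : ∀ᶠ δ in nhdsWithin (0:ℝ) (Ioi 0),
      (2:ℝ≥0∞)^n * (ENNReal.ofReal ((1-δ)^n) * volume K) ≤ volume (K - K) := by
    filter_upwards [Ioo_mem_nhdsGT_of_mem (⟨le_refl (0:ℝ), one_pos⟩ : (0:ℝ) ∈ Ico (0:ℝ) 1)]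
      with δ hδ
    exact diff_body_step hKcomp hKconv hKint hδ
  have := le_of_tendsto htends heven
  simpa using this


end BMX

open BMX in
theorem stmt7 {n : ℕ} (hn : 1 ≤ n) (K : Set (Fin n → ℝ))
    (hKcomp : IsCompact K) (hKconv : Convex ℝ K)
    (hKint : (interior K).Nonempty)
    (Kbar : Set (Fin n → ℝ))
    (hKbar : Kbar = {x | x +ᵥ (1 / (4 * n) : ℝ) • (K - K) ⊆ K})
    (xstar : Fin n → ℝ) (hx : xstar ∈ Kbar)
    (w : Fin n → ℝ) (hw : w ≠ 0)
    (Hplus : Set (Fin n → ℝ))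
    (hH : Hplus = {x | ∑ j, w j * x j ≤ ∑ j, w j * xstar j}) :
    volume (K ∩ Hplus) ≤
      ENNReal.ofReal (1 - 1 / ((n : ℝ) ^ n * 2 ^ (n + 1))) * volume K := by
  subst hKbar hH
  have hxS : xstar +ᵥ (1 / (4 * n) : ℝ) • (K - K) ⊆ K := hx
  set c : ℝ := 1 / (4 * n) with hc
  have hnR : (0:ℝ) < n := by exact_mod_cast hn
  have hcpos : 0 < c := by rw [hc]; positivity
  set t : ℝ := ∑ j, w j * xstar j with ht
  set Hm : Set (Fin n → ℝ) := {x | t ≤ ∑ j, w j * x j} with hHm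
  set S : Set (Fin n → ℝ) := xstar +ᵥ c • (K - K) with hS
  have hVne : volume K ≠ ⊤ := hKcomp.measure_lt_top.ne
  -- volume of S
  have hvolS : volume S = ENNReal.ofReal (c ^ n) * volume (K - K) := by
    rw [hS, measure_vadd, smul_set_vol, abs_of_pos hcpos]
  have hvolS2 : ENNReal.ofReal (c ^ n) * ((2:ℝ≥0∞)^n * volume K) ≤ volume S := by
    rw [hvolS]
    exact mul_le_mul_right (diff_body hKcomp hKconv hKint) _
  -- reflection
  set φ : (Fin n → ℝ) → (Fin n → ℝ) := fun x => (xstar + xstar) - x with hφ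
  have hφvol : ∀ A : Set (Fin n → ℝ), volume (φ '' A) = volume A := by
    intro A
    have himg : φ '' A = (xstar + xstar) +ᵥ (-A) := by
      ext z
      simp only [hφ, Set.mem_image, Set.mem_vadd_set, Set.mem_neg, vadd_eq_add]
      constructor
      · rintro ⟨a, ha, rfl⟩
        exact ⟨-a, by simpa using ha, by abel⟩
      · rintro ⟨y, hy, rfl⟩
        exact ⟨-y, hy, by abel⟩
    rw [himg, measure_vadd, neg_set_vol]
  have hφS : ∀ x ∈ S, φ x ∈ S := by
    intro x hxmem
    rw [hS, Set.mem_vadd_set] at hxmem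
    obtain ⟨y, hy, rfl⟩ := hxmem
    obtain ⟨d, hd, rfl⟩ := hy
    obtain ⟨p, hp, q, hq, rfl⟩ := hd
    rw [hS, Set.mem_vadd_set]
    refine ⟨c • (q - p), ⟨q - p, Set.sub_mem_sub hq hp, rfl⟩, ?_⟩
    show xstar + c • (q - p) = φ (xstar +ᵥ c • (p - q))
    simp only [hφ, vadd_eq_add, smul_sub]
    abel
  have hφsum : ∀ x : Fin n → ℝ, (∑ j, w j * φ x j) = t + t - ∑ j, w j * x j := by
    intro x
    simp only [hφ, Pi.sub_apply, Pi.add_apply, mul_sub, mul_add, Finset.sum_sub_distrib,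
      Finset.sum_add_distrib, ht]
  have hrefl : volume (S ∩ {x | ∑ j, w j * x j ≤ t}) ≤ volume (S ∩ Hm) := by
    rw [← hφvol (S ∩ {x | ∑ j, w j * x j ≤ t})]
    refine measure_mono ?_
    rintro z ⟨x, ⟨hxS', hxH⟩, rfl⟩
    refine ⟨hφS x hxS', ?_⟩
    show t ≤ ∑ j, w j * φ x j
    rw [hφsum]
    have : ∑ j, w j * x j ≤ t := hxH
    linarith
  have hhalf : volume S ≤ 2 * volume (S ∩ Hm) := by
    have hcov : S ⊆ (S ∩ Hm) ∪ (S ∩ {x | ∑ j, w j * x j ≤ t}) := by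
      intro x hxmem
      rcases le_total t (∑ j, w j * x j) with h | h
      · exact Or.inl ⟨hxmem, h⟩
      · exact Or.inr ⟨hxmem, h⟩
    calc volume S ≤ volume (S ∩ Hm) + volume (S ∩ {x | ∑ j, w j * x j ≤ t}) :=
          (measure_mono hcov).trans (measure_union_le _ _)
      _ ≤ volume (S ∩ Hm) + volume (S ∩ Hm) := add_le_add_right hrefl _
      _ = 2 * volume (S ∩ Hm) := (two_mul _).symm
  -- split K
  have hsum_meas : Measurable fun x : Fin n → ℝ => ∑ j, w j * x j :=
    Finset.measurable_sum (f := fun j (x : Fin n → ℝ) => w j * x j) Finset.univ fun j _ => by fun_prop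
  have hsplit : volume (K ∩ {x | ∑ j, w j * x j ≤ t}) + volume (K ∩ Hm) = volume K := by
    have hXY : (K ∩ {x | ∑ j, w j * x j ≤ t}) ∪ (K ∩ Hm) = K := by
      rw [← inter_union_distrib_left]
      refine inter_eq_self_of_subset_left fun x _ => ?_
      rcases le_total (∑ j, w j * x j) t with h | h
      · exact Or.inl h
      · exact Or.inr h
    have hnull : volume ((K ∩ {x | ∑ j, w j * x j ≤ t}) ∩ (K ∩ Hm)) = 0 := by
      refine measure_mono_null (fun x hxmem => ?_) (null_hyperplane w hw t)
      exact le_antisymm hxmem.1.2 hxmem.2.2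
    have hHmeas : MeasurableSet (K ∩ Hm) :=
      hKcomp.isClosed.measurableSet.inter (measurableSet_le measurable_const hsum_meas)
    have h := measure_union_add_inter (μ := (volume : Measure (Fin n → ℝ)))
      (K ∩ {x | ∑ j, w j * x j ≤ t}) hHmeas
    rw [hXY, hnull, add_zero] at h
    exact h.symm
  -- put together
  set ε : ℝ := 1 / ((n : ℝ) ^ n * 2 ^ (n + 1)) with hε
  have hnn : (0:ℝ) < (n:ℝ)^n := by positivity
  have hεpos : 0 < ε := by rw [hε]; positivity
  have hεle : ε ≤ 1 := by
    rw [hε]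
    rw [div_le_one (by positivity)]
    have h1 : (1:ℝ) ≤ (n:ℝ)^n := by
      calc (1:ℝ) = 1^n := (one_pow n).symm
        _ ≤ (n:ℝ)^n := pow_le_pow_left₀ (by norm_num) (by exact_mod_cast hn) n
    have h2 : (1:ℝ) ≤ 2^(n+1) := by
      calc (1:ℝ) = 1^(n+1) := (one_pow _).symm
        _ ≤ 2^(n+1) := pow_le_pow_left₀ (by norm_num) (by norm_num) _
    nlinarith
  have hkey : ENNReal.ofReal (c^n) * (2:ℝ≥0∞)^n = 2 * ENNReal.ofReal ε := by
    have h2n : ((2:ℝ≥0∞))^n = ENNReal.ofReal ((2:ℝ)^n) := by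
      rw [ENNReal.ofReal_pow (by norm_num)]
      norm_num
    rw [h2n, ← ENNReal.ofReal_mul (by positivity),
      show (2:ℝ≥0∞) = ENNReal.ofReal 2 by norm_num,
      ← ENNReal.ofReal_mul (by norm_num)]
    congr 1
    rw [hc, hε]
    rw [div_pow, one_pow, mul_pow, pow_succ]
    have h4 : (4:ℝ)^n = 2^n * 2^n := by rw [← mul_pow]; norm_num
    rw [h4]
    field_simp
  have hQ : ENNReal.ofReal ε * volume K ≤ volume (K ∩ Hm) := by
    have hSK : S ∩ Hm ⊆ K ∩ Hm := inter_subset_inter_left _ hxS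
    have h1 : 2 * (ENNReal.ofReal ε * volume K) ≤ 2 * volume (K ∩ Hm) := by
      calc 2 * (ENNReal.ofReal ε * volume K) = (2 * ENNReal.ofReal ε) * volume K := by ring
        _ = ENNReal.ofReal (c^n) * ((2:ℝ≥0∞)^n * volume K) := by rw [← hkey]; ring
        _ ≤ volume S := hvolS2
        _ ≤ 2 * volume (S ∩ Hm) := hhalf
        _ ≤ 2 * volume (K ∩ Hm) := mul_le_mul_right (measure_mono hSK) 2
    exact (ENNReal.mul_le_mul_iff_right (by norm_num) (by norm_num)).1 h1
  -- final arithmetic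
  have hfin : ENNReal.ofReal ε * volume K ≠ ⊤ := ENNReal.mul_ne_top ENNReal.ofReal_ne_top hVne
  rw [← ENNReal.add_le_add_iff_right hfin]
  calc volume (K ∩ {x | ∑ j, w j * x j ≤ t}) + ENNReal.ofReal ε * volume K
      ≤ volume (K ∩ {x | ∑ j, w j * x j ≤ t}) + volume (K ∩ Hm) := add_le_add_right hQ _
    _ = volume K := hsplit
    _ = (ENNReal.ofReal (1 - ε) + ENNReal.ofReal ε) * volume K := by
        rw [← ENNReal.ofReal_add (by linarith) (by linarith)]
        norm_num
    _ = ENNReal.ofReal (1 - ε) * volume K + ENNReal.ofReal ε * volume K := by ring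
end

section
/- Let n ≥ 2, let Λ be a full-rank lattice in ℝ^n, let C := {x ∈ ℝ^n : (1/(2(n−1)))·Σ_{i=1}^{n−1} x_i² ≤ x_n ≤ 1} and C̄ := {x ∈ ℝ^n : Σ_{i=1}^{n−1} x_i² ≤ x_n ≤ 1}. If the interior of C̄ contains no point of Λ, then the lattice points C ∩ Λ can be covered by at most 4^n · n^{3n} hyperplanes. -/
open MeasureTheory ENNReal Pointwise

/-- A full-rank lattice in `ℝⁿ`: the image of `ℤⁿ` under an invertible
linear map. -/
def IsFullLattice {n : ℕ} (Λ : Set (Fin n → ℝ)) : Prop :=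
  ∃ B : (Fin n → ℝ) ≃ₗ[ℝ] (Fin n → ℝ),
    Λ = ⇑B '' {x | ∀ i, ∃ z : ℤ, x i = (z : ℝ)}

lemma lattice_exists_subgroup {n : ℕ} {Λ : Set (Fin n → ℝ)} (hΛ : IsFullLattice Λ) :
    ∃ H : AddSubgroup (Fin n → ℝ), (H : Set (Fin n → ℝ)) = Λ := by
  obtain ⟨B, rfl⟩ := hΛ
  refine ⟨AddSubgroup.map B.toLinearMap.toAddMonoidHom
    { carrier := {x | ∀ i, ∃ z : ℤ, x i = (z : ℝ)}
      zero_mem' := fun i => ⟨0, by simp⟩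
      add_mem' := by
        rintro a b ha hb i
        obtain ⟨z1, h1⟩ := ha i; obtain ⟨z2, h2⟩ := hb i
        exact ⟨z1 + z2, by simp [h1, h2]⟩
      neg_mem' := by
        rintro a ha i
        obtain ⟨z, h⟩ := ha i
        exact ⟨-z, by simp [h]⟩ }, ?_⟩
  rw [AddSubgroup.coe_map]
  rfl

lemma arith1 {n : ℝ} (hn : 2 ≤ n) : 1 / (4 * n) < 1 / 2 - 1 / (2 * n) := by
  rw [show (1 : ℝ) / 2 - 1 / (2 * n) = (n - 1) / (2 * n) by field_simp; try ring]
  rw [div_lt_div_iff₀ (by linarith) (by linarith)]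
  nlinarith

lemma arith2 {n : ℝ} (hn : 2 ≤ n) : 1 / (2 * n) ≤ 1 / 4 := by
  rw [div_le_div_iff₀ (by linarith) (by norm_num)]
  linarith

lemma final_ineq {n : ℕ} (hn : 2 ≤ n) (t y : Fin n → ℝ)
    (htlast : t ⟨n - 1, Nat.sub_lt (by omega) Nat.one_pos⟩ = 1 / 2)
    (htzero : ∀ i : Fin n, (i : ℕ) < n - 1 → t i = 0)
    (hyj : ∀ j, |y j - t j| ≤ 1 / (2 * (n : ℝ))) :
    (∑ i ∈ Finset.univ.filter (fun i : Fin n => (i : ℕ) < n - 1), (y i) ^ 2)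
        < y ⟨n - 1, Nat.sub_lt (by omega) Nat.one_pos⟩ ∧ y ⟨n - 1, Nat.sub_lt (by omega) Nat.one_pos⟩ < 1 := by
  have hnR : (2 : ℝ) ≤ (n : ℝ) := by exact_mod_cast hn
  have hn0 : (0 : ℝ) < (n : ℝ) := by linarith
  have hyl := hyj ⟨n - 1, Nat.sub_lt (by omega) Nat.one_pos⟩
  rw [htlast] at hyl
  have hyl' := abs_le.mp hyl
  constructor
  · have hsum : (∑ i ∈ Finset.univ.filter (fun i : Fin n => (i : ℕ) < n - 1), (y i) ^ 2)
        ≤ (∑ _i ∈ Finset.univ.filter (fun i : Fin n => (i : ℕ) < n - 1),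
            (1 / (2 * (n : ℝ))) ^ 2) := by
      refine Finset.sum_le_sum fun i hi => ?_
      have hi' : (i : ℕ) < n - 1 := (Finset.mem_filter.mp hi).2
      have hti := htzero i hi'
      have h := hyj i
      rw [hti, sub_zero] at h
      have h' := abs_le.mp h
      nlinarith [h'.1, h'.2]
    have hcardf : ((Finset.univ.filter (fun i : Fin n => (i : ℕ) < n - 1)).card : ℝ) ≤ n := by
      have := Finset.card_filter_le (Finset.univ : Finset (Fin n)) (fun i => (i : ℕ) < n - 1)
      simp only [Finset.card_univ, Fintype.card_fin] at this
      exact_mod_cast this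
    rw [Finset.sum_const, nsmul_eq_mul] at hsum
    have h1 : (1 / (2 * (n : ℝ))) ^ 2 ≥ 0 := by positivity
    have h2 : ((Finset.univ.filter (fun i : Fin n => (i : ℕ) < n - 1)).card : ℝ)
        * (1 / (2 * (n : ℝ))) ^ 2 ≤ (n : ℝ) * (1 / (2 * (n : ℝ))) ^ 2 :=
      mul_le_mul_of_nonneg_right hcardf h1
    have h3 : (n : ℝ) * (1 / (2 * (n : ℝ))) ^ 2 = 1 / (4 * n) := by
      field_simp
      try ring
    have h4 : (1 : ℝ) / (4 * n) < 1 / 2 - 1 / (2 * n) := arith1 hnR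
    calc (∑ i ∈ Finset.univ.filter (fun i : Fin n => (i : ℕ) < n - 1), (y i) ^ 2)
        ≤ 1 / (4 * (n : ℝ)) := by rw [← h3]; exact hsum.trans h2
      _ < 1 / 2 - 1 / (2 * n) := h4
      _ ≤ y ⟨n - 1, Nat.sub_lt (by omega) Nat.one_pos⟩ := by linarith [hyl'.1]
  · have h5 : (1 : ℝ) / (2 * n) ≤ 1 / 4 := arith2 hnR
    linarith [hyl'.2]

/-- Key lemma: a subset of the lattice of small diameter whose points avoid
the open region lies in a hyperplane. -/
lemma key_lemma {n : ℕ} (hn : 2 ≤ n) (H : AddSubgroup (Fin n → ℝ))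
    (hint : ∀ y ∈ H, ¬ ((∑ i ∈ Finset.univ.filter (fun i : Fin n => (i : ℕ) < n - 1), (y i) ^ 2)
        < y ⟨n - 1, Nat.sub_lt (by omega) Nat.one_pos⟩ ∧ y ⟨n - 1, Nat.sub_lt (by omega) Nat.one_pos⟩ < 1))
    (S : Set (Fin n → ℝ)) (hSH : S ⊆ (H : Set (Fin n → ℝ)))
    (hsmall : ∀ x ∈ S, ∀ y ∈ S, ∀ j, |x j - y j| ≤ 1 / (n : ℝ) ^ 2) :
    ∃ (c : Fin n → ℝ) (γ : ℝ), c ≠ 0 ∧ ∀ x ∈ S, ∑ j, c j * x j = γ := by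
  classical
  have hnR : (2 : ℝ) ≤ (n : ℝ) := by exact_mod_cast hn
  have hn0 : (0 : ℝ) < (n : ℝ) := by linarith
  rcases S.eq_empty_or_nonempty with hS | ⟨s₀, hs₀⟩
  · refine ⟨Pi.single ⟨0, by omega⟩ 1, 0, ?_, by simp [hS]⟩
    intro h
    have := congrFun h ⟨0, by omega⟩
    simp [Pi.single_eq_same] at this
  set D : Set (Fin n → ℝ) := (fun s => s - s₀) '' S with hD
  have hDcoord : ∀ d ∈ D, ∀ j, |d j| ≤ 1 / (n : ℝ) ^ 2 := by
    rintro _ ⟨s, hs, rfl⟩ j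
    exact hsmall s hs s₀ hs₀ j
  have hDH : D ⊆ (H : Set (Fin n → ℝ)) := by
    rintro _ ⟨s, hs, rfl⟩
    exact H.sub_mem (hSH hs) (hSH hs₀)
  by_cases htop : Submodule.span ℝ D = ⊤
  · exfalso
    obtain ⟨b, hbD, hspan, hli⟩ := exists_linearIndependent ℝ D
    have hsp : ⊤ ≤ Submodule.span ℝ (Set.range ((↑) : b → (Fin n → ℝ))) := by
      rw [Subtype.range_coe, hspan, htop]
    let bas : Module.Basis b ℝ (Fin n → ℝ) := Module.Basis.mk hli hsp
    haveI : Fintype b := FiniteDimensional.fintypeBasisIndex bas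
    have hcard : Fintype.card b = n := by
      rw [← Module.finrank_eq_card_basis bas, Module.finrank_fin_fun]
    set t : Fin n → ℝ := fun j => if (j : ℕ) = n - 1 then (1 : ℝ) / 2 else 0 with ht
    set y : Fin n → ℝ := ∑ i : b, round (bas.repr t i) • (i : Fin n → ℝ) with hy
    have hyH : y ∈ H :=
      AddSubgroup.sum_mem _ fun i _ => AddSubgroup.zsmul_mem _ (hDH (hbD i.2)) _
    have hyj : ∀ j, |y j - t j| ≤ 1 / (2 * (n : ℝ)) := by
      intro j
      have h1 : y j = ∑ i : b, ((round (bas.repr t i) : ℝ)) * (i : Fin n → ℝ) j := by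
        rw [hy, Finset.sum_apply]
        refine Finset.sum_congr rfl fun i _ => ?_
        rw [Pi.smul_apply, zsmul_eq_mul]
      have h2 : t j = ∑ i : b, (bas.repr t i) * (i : Fin n → ℝ) j := by
        conv_lhs => rw [← bas.sum_repr t]
        rw [Finset.sum_apply]
        refine Finset.sum_congr rfl fun i _ => ?_
        rw [Pi.smul_apply, smul_eq_mul, Module.Basis.mk_apply]
      rw [h1, h2, ← Finset.sum_sub_distrib]
      refine (Finset.abs_sum_le_sum_abs _ _).trans ?_
      have hterm : ∀ i : b, i ∈ Finset.univ →
          |((round (bas.repr t i) : ℝ)) * (i : Fin n → ℝ) j - (bas.repr t i) * (i : Fin n → ℝ) j|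
            ≤ (1 / 2) * (1 / (n : ℝ) ^ 2) := by
        intro i _
        rw [← sub_mul, abs_mul]
        refine mul_le_mul ?_ (hDcoord _ (hbD i.2) j) (abs_nonneg _) (by norm_num)
        rw [abs_sub_comm]
        exact abs_sub_round _
      refine (Finset.sum_le_sum hterm).trans ?_
      rw [Finset.sum_const, Finset.card_univ, hcard, nsmul_eq_mul]
      have heq : (n : ℝ) * (1 / 2 * (1 / (n : ℝ) ^ 2)) = 1 / (2 * (n : ℝ)) := by
        field_simp
        try ring
      exact le_of_eq heq
    have htlast : t ⟨n - 1, Nat.sub_lt (by omega) Nat.one_pos⟩ = 1 / 2 := by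
      rw [ht]; simp
    have htzero : ∀ i : Fin n, (i : ℕ) < n - 1 → t i = 0 := by
      intro i hi
      rw [ht]
      simp only []
      rw [if_neg (by omega)]
    exact hint y hyH (final_ineq hn t y htlast htzero hyj)
  · have hlt : Submodule.span ℝ D < ⊤ := lt_top_iff_ne_top.mpr htop
    obtain ⟨φ, hφ0, hφ⟩ := Submodule.exists_dual_map_eq_bot_of_lt_top hlt inferInstance
    set c : Fin n → ℝ := fun j => φ (fun k => if j = k then 1 else 0) with hc
    have hφx : ∀ x : Fin n → ℝ, φ x = ∑ j, c j * x j := by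
      intro x
      rw [LinearMap.pi_apply_eq_sum_univ]
      refine Finset.sum_congr rfl fun j _ => ?_
      rw [smul_eq_mul, mul_comm]
    have hker : ∀ v ∈ Submodule.span ℝ D, φ v = 0 := by
      intro v hv
      have : φ v ∈ Submodule.map φ (Submodule.span ℝ D) := Submodule.mem_map_of_mem hv
      rw [hφ] at this
      simpa using this
    refine ⟨c, ∑ j, c j * s₀ j, ?_, ?_⟩
    · intro h
      apply hφ0
      refine LinearMap.ext fun x => ?_
      rw [hφx]
      simp [congrFun h]
    · intro x hx
      have hmem : x - s₀ ∈ Submodule.span ℝ D := Submodule.subset_span ⟨x, hx, rfl⟩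
      have h0 : φ (x - s₀) = 0 := hker _ hmem
      rw [map_sub] at h0
      have : φ x = φ s₀ := by linarith
      rw [← hφx x, this, hφx s₀]

theorem stmt13 {n : ℕ} (hn : 2 ≤ n) (Λ : Set (Fin n → ℝ))
    (hΛ : IsFullLattice Λ)
    (C Cbar : Set (Fin n → ℝ))
    (hC : C = {x | (1 / (2 * ((n : ℝ) - 1))) *
        (∑ i ∈ Finset.univ.filter (fun i : Fin n => (i : ℕ) < n - 1), (x i) ^ 2) ≤
          x ⟨n - 1, by omega⟩ ∧ x ⟨n - 1, by omega⟩ ≤ 1})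
    (hCbar : Cbar = {x | (∑ i ∈ Finset.univ.filter (fun i : Fin n => (i : ℕ) < n - 1),
        (x i) ^ 2) ≤ x ⟨n - 1, by omega⟩ ∧ x ⟨n - 1, by omega⟩ ≤ 1})
    (hempty : interior Cbar ∩ Λ = ∅) :
    ∃ (c : Fin (4 ^ n * n ^ (3 * n)) → (Fin n → ℝ))
      (γ : Fin (4 ^ n * n ^ (3 * n)) → ℝ),
      (∀ k, c k ≠ 0) ∧
      ∀ x ∈ C ∩ Λ, ∃ k, ∑ j, c k j * x j = γ k := by
  classical
  obtain ⟨H, hH⟩ := lattice_exists_subgroup hΛ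
  have hnR : (2 : ℝ) ≤ (n : ℝ) := by exact_mod_cast hn
  have hn0 : (0 : ℝ) < (n : ℝ) := by linarith
  -- the open region is inside the interior of Cbar
  have hopen : IsOpen {x : Fin n → ℝ |
      (∑ i ∈ Finset.univ.filter (fun i : Fin n => (i : ℕ) < n - 1), (x i) ^ 2)
        < x ⟨n - 1, by omega⟩ ∧ x ⟨n - 1, by omega⟩ < 1} := by
    have hc1 : Continuous fun x : Fin n → ℝ =>
        (∑ i ∈ Finset.univ.filter (fun i : Fin n => (i : ℕ) < n - 1), (x i) ^ 2) := by
      fun_prop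
    exact (isOpen_lt hc1 (continuous_apply _)).and (isOpen_lt (continuous_apply _) continuous_const)
  have hint : ∀ y ∈ H, ¬ ((∑ i ∈ Finset.univ.filter (fun i : Fin n => (i : ℕ) < n - 1), (y i) ^ 2)
      < y ⟨n - 1, by omega⟩ ∧ y ⟨n - 1, by omega⟩ < 1) := by
    intro y hy hlt
    have hsub : {x : Fin n → ℝ |
        (∑ i ∈ Finset.univ.filter (fun i : Fin n => (i : ℕ) < n - 1), (x i) ^ 2)
          < x ⟨n - 1, by omega⟩ ∧ x ⟨n - 1, by omega⟩ < 1} ⊆ Cbar := by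
      rw [hCbar]
      intro z hz
      exact ⟨hz.1.le, hz.2.le⟩
    have h1 : y ∈ interior Cbar := interior_maximal hsub hopen hlt
    have h2 : y ∈ interior Cbar ∩ Λ := ⟨h1, by rw [← hH]; exact hy⟩
    rw [hempty] at h2
    exact h2
  -- box indexing
  have hcardT : Fintype.card (Fin n → Fin (4 * n ^ 3)) = 4 ^ n * n ^ (3 * n) := by
    rw [Fintype.card_fun, Fintype.card_fin, Fintype.card_fin, mul_pow, ← pow_mul]
  let e : (Fin n → Fin (4 * n ^ 3)) ≃ Fin (4 ^ n * n ^ (3 * n)) := Fintype.equivFinOfCardEq hcardT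
  let g : (Fin n → ℝ) → Fin n → ℤ := fun x j => ⌊(x j + 2 * n) * (n : ℝ) ^ 2⌋
  have hfinpos : 0 < 4 * n ^ 3 := by positivity
  let f : (Fin n → ℝ) → (Fin n → Fin (4 * n ^ 3)) := fun x j =>
    if h : 0 ≤ g x j ∧ g x j < ((4 * n ^ 3 : ℕ) : ℤ) then ⟨(g x j).toNat, by omega⟩
    else ⟨0, hfinpos⟩
  have hbound : ∀ x ∈ C, ∀ j, 0 ≤ g x j ∧ g x j < ((4 * n ^ 3 : ℕ) : ℤ) := by
    intro x hx j
    rw [hC] at hx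
    obtain ⟨h1, h2⟩ := hx
    have hn1 : (1 : ℝ) ≤ (n : ℝ) - 1 := by linarith
    have hsumnn : (0 : ℝ) ≤ ∑ i ∈ Finset.univ.filter (fun i : Fin n => (i : ℕ) < n - 1),
        (x i) ^ 2 := Finset.sum_nonneg fun i _ => sq_nonneg _
    have hxl0 : (0 : ℝ) ≤ x ⟨n - 1, by omega⟩ := le_trans (by positivity) h1
    have hsum : (∑ i ∈ Finset.univ.filter (fun i : Fin n => (i : ℕ) < n - 1), (x i) ^ 2)
        ≤ 2 * ((n : ℝ) - 1) := by
      have h3 : (1 / (2 * ((n : ℝ) - 1))) *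
          (∑ i ∈ Finset.univ.filter (fun i : Fin n => (i : ℕ) < n - 1), (x i) ^ 2) ≤ 1 :=
        le_trans h1 h2
      rw [one_div, inv_mul_le_iff₀ (by linarith)] at h3
      linarith
    have hj : -(2 * (n : ℝ)) ≤ x j ∧ x j < 2 * n := by
      rcases lt_or_ge ((j : ℕ)) (n - 1) with hjlt | hjge
      · have hterm : (x j) ^ 2 ≤ 2 * ((n : ℝ) - 1) := by
          refine le_trans ?_ hsum
          exact Finset.single_le_sum (fun i _ => sq_nonneg (x i)) (by simp [hjlt])
        constructor <;> nlinarith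
      · have hjn : (j : ℕ) = n - 1 := by have := j.isLt; omega
        have hje : j = ⟨n - 1, by omega⟩ := Fin.ext hjn
        rw [hje]
        constructor <;> nlinarith
    constructor
    · rw [Int.le_floor]
      push_cast
      nlinarith [hj.1, sq_nonneg ((n : ℝ))]
    · rw [Int.floor_lt]
      push_cast
      nlinarith [hj.2, sq_nonneg ((n : ℝ)), mul_pos hn0 hn0]
  have hclose : ∀ x ∈ C, ∀ y ∈ C, f x = f y → ∀ j, |x j - y j| ≤ 1 / (n : ℝ) ^ 2 := by
    intro x hx y hy hf j
    have hx' := hbound x hx j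
    have hy' := hbound y hy j
    have hg : g x j = g y j := by
      have hfj := congrFun hf j
      simp only [f, dif_pos hx', dif_pos hy', Fin.mk.injEq] at hfj
      omega
    have hn2 : (0 : ℝ) < (n : ℝ) ^ 2 := by positivity
    have hx1 : ((g x j : ℝ)) ≤ (x j + 2 * n) * (n : ℝ) ^ 2 := Int.floor_le _
    have hx2 : (x j + 2 * n) * (n : ℝ) ^ 2 < (g x j : ℝ) + 1 := Int.lt_floor_add_one _
    have hy1 : ((g y j : ℝ)) ≤ (y j + 2 * n) * (n : ℝ) ^ 2 := Int.floor_le _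
    have hy2 : (y j + 2 * n) * (n : ℝ) ^ 2 < (g y j : ℝ) + 1 := Int.lt_floor_add_one _
    have hgR : ((g x j : ℝ)) = ((g y j : ℝ)) := by exact_mod_cast hg
    rw [abs_le]
    constructor
    · rw [neg_le, neg_sub, le_div_iff₀ hn2]
      nlinarith
    · rw [le_div_iff₀ hn2]
      nlinarith
  have hkey : ∀ k : Fin (4 ^ n * n ^ (3 * n)), ∃ (c : Fin n → ℝ) (γ : ℝ), c ≠ 0 ∧
      ∀ x ∈ {x : Fin n → ℝ | x ∈ C ∩ Λ ∧ e (f x) = k}, ∑ j, c j * x j = γ := by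
    intro k
    apply key_lemma hn H hint
    · intro x hx
      have hxl : x ∈ Λ := hx.1.2
      rwa [← hH] at hxl
    · intro x hx y hy j
      refine hclose x hx.1.1 y hy.1.1 ?_ j
      apply e.injective
      rw [hx.2, hy.2]
  choose c γ hc hγ using hkey
  exact ⟨c, γ, hc, fun x hx => ⟨e (f x), hγ _ x ⟨hx, rfl⟩⟩⟩
end

section
/- Let Λ be a full-rank lattice in ℝ^n and let Q be a box d + [0, 1/n²]^n for some d ∈ ℝ^n. Suppose Q contains n+1 affinely independent points v_0,…,v_n of Λ. Then the set Z := {Σ_{i=1}^n λ_i (v_i − v_0) : −1/2 ≤ λ_i ≤ 1/2} satisfies Z + Λ = ℝ^n; in particular every translate of [−1/(2n), 1/(2n)]^n contains a lattice point of Λ. -/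
open MeasureTheory ENNReal Pointwise

theorem stmt14 {n : ℕ} (hn : 1 ≤ n) (Λ : Set (Fin n → ℝ))
    (hΛ : IsFullLattice Λ) (d : Fin n → ℝ)
    (v : Fin (n + 1) → (Fin n → ℝ))
    (hvΛ : ∀ i, v i ∈ Λ)
    (hvbox : ∀ i j, v i j ∈ Set.Icc (d j) (d j + 1 / (n : ℝ) ^ 2))
    (hindep : AffineIndependent ℝ v)
    (Z : Set (Fin n → ℝ))
    (hZ : Z = {x | ∃ l : Fin n → ℝ,
        (∀ i, -(1 / 2 : ℝ) ≤ l i ∧ l i ≤ 1 / 2) ∧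
        x = ∑ i, l i • (v i.succ - v 0)}) :
    Z + Λ = Set.univ ∧
      ∀ t : Fin n → ℝ, ∃ p ∈ Λ, ∀ j, |p j - t j| ≤ 1 / (2 * n) := by
  obtain ⟨B, hB⟩ := hΛ
  set w : Fin n → (Fin n → ℝ) := fun i => v i.succ - v 0 with hw
  have hvint : ∀ i j, ∃ z : ℤ, B.symm (v i) j = (z : ℝ) := by
    intro i
    have h := hvΛ i
    rw [hB] at h
    obtain ⟨x, hx, hxe⟩ := h
    intro j
    have hxx : B.symm (v i) = x := by rw [← hxe]; simp
    rw [hxx]; exact hx j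
  choose c hc using hvint
  have hmem : ∀ m : Fin n → ℤ, (∑ i, (m i : ℝ) • w i) ∈ Λ := by
    intro m
    rw [hB]
    refine ⟨∑ i, (m i : ℝ) • (B.symm (v i.succ) - B.symm (v 0)), ?_, ?_⟩
    · intro j
      refine ⟨∑ i, m i * (c i.succ j - c 0 j), ?_⟩
      rw [Finset.sum_apply]
      push_cast
      refine Finset.sum_congr rfl fun i _ => ?_
      simp [hc, smul_eq_mul]
    · rw [map_sum]
      refine Finset.sum_congr rfl fun i _ => ?_
      rw [_root_.map_smul, map_sub, B.apply_symm_apply, B.apply_symm_apply]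
  have hli : LinearIndependent ℝ w := by
    have h := (affineIndependent_iff_linearIndependent_vsub ℝ v 0).mp hindep
    have h2 := h.comp
      (fun i : Fin n => (⟨i.succ, Fin.succ_ne_zero i⟩ : {x : Fin (n+1) // x ≠ 0}))
      (fun a b hab => by
        simpa [Fin.succ_inj] using congrArg Subtype.val hab)
    simpa [Function.comp_def, hw] using h2
  haveI : Nonempty (Fin n) := ⟨⟨0, hn⟩⟩
  have hcard : Fintype.card (Fin n) = Module.finrank ℝ (Fin n → ℝ) := by simp
  let b := basisOfLinearIndependentOfCardEqFinrank hli hcard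
  have hb : ∀ i, b i = w i := fun i => by
    simp [b, coe_basisOfLinearIndependentOfCardEqFinrank]
  have hcover : ∀ x : Fin n → ℝ, ∃ z ∈ Z, ∃ p ∈ Λ, x = z + p := by
    intro x
    refine ⟨∑ i, (b.repr x i - round (b.repr x i)) • w i, ?_,
      ∑ i, ((round (b.repr x i) : ℝ)) • w i, hmem _, ?_⟩
    · rw [hZ]
      refine ⟨fun i => b.repr x i - round (b.repr x i), fun i => ?_, rfl⟩
      have := abs_sub_round (b.repr x i)
      rw [abs_le] at this
      exact ⟨this.1, this.2⟩
    · have hx : x = ∑ i, (b.repr x i) • w i := by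
        conv_lhs => rw [← b.sum_repr x]
        exact Finset.sum_congr rfl fun i _ => by rw [hb]
      have hsum : (∑ i, (b.repr x i - round (b.repr x i)) • w i) +
          ∑ i, ((round (b.repr x i) : ℝ)) • w i = ∑ i, (b.repr x i) • w i := by
        rw [← Finset.sum_add_distrib]
        refine Finset.sum_congr rfl fun i _ => ?_
        rw [← add_smul, sub_add_cancel]
      rw [hsum]
      exact hx
  have hwbd : ∀ i j, |w i j| ≤ 1 / (n : ℝ) ^ 2 := by
    intro i j
    obtain ⟨h1, h2⟩ := hvbox i.succ j
    obtain ⟨h3, h4⟩ := hvbox 0 j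
    have hwe : w i j = v i.succ j - v 0 j := rfl
    rw [hwe, abs_sub_le_iff]
    constructor <;> linarith
  constructor
  · ext x
    simp only [Set.mem_univ, iff_true, Set.mem_add]
    obtain ⟨z, hz, p, hp, hxzp⟩ := hcover x
    exact ⟨z, hz, p, hp, hxzp.symm⟩
  · intro t
    obtain ⟨z, hz, p, hp, htzp⟩ := hcover t
    refine ⟨p, hp, fun j => ?_⟩
    have hpz : p j - t j = -(z j) := by rw [htzp]; simp
    rw [hpz, abs_neg]
    rw [hZ] at hz
    obtain ⟨l, hl, hze⟩ := hz
    have hzj : z j = ∑ i, l i * (w i j) := by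
      rw [hze, Finset.sum_apply]
      exact Finset.sum_congr rfl fun i _ => rfl
    rw [hzj]
    calc |∑ i, l i * w i j| ≤ ∑ i, |l i * w i j| := Finset.abs_sum_le_sum_abs _ _
      _ ≤ ∑ _i : Fin n, (1/2) * (1 / (n : ℝ) ^ 2) := by
          refine Finset.sum_le_sum fun i _ => ?_
          rw [abs_mul]
          have hli' : |l i| ≤ 1/2 := abs_le.mpr ⟨(hl i).1, (hl i).2⟩
          exact mul_le_mul hli' (hwbd i j) (abs_nonneg _) (by norm_num)
      _ = 1 / (2 * n) := by
          rw [Finset.sum_const, Finset.card_univ, Fintype.card_fin, nsmul_eq_mul]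
          have hn' : (n : ℝ) ≠ 0 := by positivity
          field_simp
end
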